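/- arXiv:1611.09762 — 4 statements merged into one kernel-verified Lean document; each statement's English description precedes it below -/
import Mathlib

section
/- Let 0 < s < 1 and let ε > 0 be small enough depending only on s. There exist constants c > 0 and C ≥ 1 (depending only on s) such that for all dyadic 0 < δ < 1/2 the following holds. Assume that P ⊂ B(0,1) ⊂ ℝ² is a (δ,1,δ^{−ε})-set with |P| ≥ δ^{−1+ε}, and 𝓣 is a family of dyadic δ-tubes such that for every point p ∈ P there exists a sub-family 𝓣_p ⊂ {T ∈ 𝓣 : p ∈ T} with |𝓣_p| ≥ δ^{−s+ε}. Then |𝓣| ≥ c (log(1/δ))^{−C} δ^{−2s+6ε}. -/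
open Metric MeasureTheory Filter Set
open scoped ENNReal NNReal Pointwise

noncomputable section

abbrev Plane : Type := EuclideanSpace ℝ (Fin 2)

def pt (a b : ℝ) : Plane := (EuclideanSpace.equiv (Fin 2) ℝ).symm ![a, b]

def proj (e x : Plane) : ℝ := inner ℝ x e

def lineThrough (a e : Plane) : Set Plane := {x | ∃ t : ℝ, x = a + t • e}

def dualLine (p : Plane) : Set Plane := {q | q 1 = p 0 * q 0 + p 1}

def hContent {X : Type*} [PseudoEMetricSpace X] (s : ℝ) (B : Set X) : ℝ≥0∞ :=
  ⨅ (U : ℕ → Set X) (_ : B ⊆ ⋃ i, U i), ∑' i, EMetric.diam (U i) ^ s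

def covN {X : Type*} [PseudoMetricSpace X] (F : Set X) (δ : ℝ) : ℕ∞ :=
  ⨅ (G : Finset X) (_ : F ⊆ ⋃ x ∈ G, Metric.closedBall x δ), (G.card : ℕ∞)

def upperMinkDim {X : Type*} [PseudoMetricSpace X] (F : Set X) : EReal :=
  Filter.limsup (fun δ : ℝ => ((Real.log ((covN F δ).toNat : ℝ) / Real.log (1 / δ) : ℝ) : EReal))
    (nhdsWithin 0 (Set.Ioi 0))

def packDim {X : Type*} [PseudoMetricSpace X] (K : Set X) : EReal :=
  ⨅ (F : ℕ → Set X) (_ : K ⊆ ⋃ i, F i) (_ : ∀ i, Bornology.IsBounded (F i)),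
    ⨆ i, upperMinkDim (F i)

def IsDeltaSet {X : Type*} [PseudoMetricSpace X] (δ s C : ℝ) (P : Set X) : Prop :=
  P.Finite ∧ (∀ p ∈ P, ∀ q ∈ P, p ≠ q → δ ≤ dist p q) ∧
    ∀ (x : X) (r : ℝ), δ ≤ r → r ≤ 1 →
      ((P ∩ Metric.closedBall x r).ncard : ℝ) ≤ C * (r / δ) ^ s

def CoverableBy {X : Type*} [PseudoMetricSpace X] (F : Set X) (δ m : ℝ) : Prop :=
  ∃ G : Finset X, (F ⊆ ⋃ x ∈ G, Metric.closedBall x δ) ∧ (G.card : ℝ) ≤ m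

def DyadicCorner (δ : ℝ) (c : ℝ × ℝ) : Prop := ∃ m n : ℤ, c.1 = m * δ ∧ c.2 = n * δ

def DyadicCornerIn01 (δ : ℝ) (c : ℝ × ℝ) : Prop :=
  DyadicCorner δ c ∧ c.1 ∈ Set.Ico (0:ℝ) 1 ∧ c.2 ∈ Set.Ico (0:ℝ) 1

def tube (δ : ℝ) (c : ℝ × ℝ) : Set Plane :=
  {x | ∃ u ∈ Set.Ico c.1 (c.1 + δ), ∃ v ∈ Set.Ico c.2 (c.2 + δ), x 1 = u * x 0 + v}

def parent (ρ : ℝ) (c : ℝ × ℝ) : ℝ × ℝ := (ρ * ⌊c.1 / ρ⌋, ρ * ⌊c.2 / ρ⌋)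


def ordTube (δ : ℝ) (a v : Plane) : Set Plane := Metric.cthickening (δ / 2) (lineThrough a v)

def IsOrdTube (δ : ℝ) (T : Set Plane) : Prop := ∃ a v : Plane, ‖v‖ = 1 ∧ T = ordTube δ a v

def Separated (δ : ℝ) (A : Set ℝ) : Prop := ∀ a ∈ A, ∀ b ∈ A, a ≠ b → δ ≤ |a - b|

def CoverableByIntervals (F : Set ℝ) (δ m : ℝ) : Prop :=
  ∃ G : Finset ℝ, (F ⊆ ⋃ x ∈ G, Set.Icc x (x + δ)) ∧ (G.card : ℝ) ≤ m

attribute [local instance] Classical.propDecidable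

/-- A finset of integers pairwise within distance R has at most R+1 elements. -/
lemma card_int_window (A : Finset ℤ) (R : ℝ) (hR : 0 ≤ R)
    (h : ∀ a ∈ A, ∀ b ∈ A, |(a : ℝ) - b| ≤ R) : (A.card : ℝ) ≤ R + 1 := by
  rcases A.eq_empty_or_nonempty with rfl | hA
  · simp; linarith
  · set a0 := A.min' hA with ha0
    have hsub : A ⊆ Finset.Icc a0 (a0 + ⌊R⌋) := by
      intro a ha
      rw [Finset.mem_Icc]
      refine ⟨A.min'_le a ha, ?_⟩
      have h1 : (|(a:ℝ) - a0|) ≤ R := h a ha a0 (A.min'_mem hA)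
      have h2 : (a0 : ℤ) ≤ a := A.min'_le a ha
      have h3 : ((a - a0 : ℤ) : ℝ) ≤ R := by
        push_cast
        calc ((a:ℝ) - a0) ≤ |(a:ℝ) - a0| := le_abs_self _
        _ ≤ R := h1
      have h4 : a - a0 ≤ ⌊R⌋ := Int.le_floor.mpr h3
      omega
    have hcard : A.card ≤ (Finset.Icc a0 (a0 + ⌊R⌋)).card := Finset.card_le_card hsub
    have h5 : (Finset.Icc a0 (a0 + ⌊R⌋)).card = (⌊R⌋ + 1).toNat := by
      rw [Int.card_Icc]; ring_nf
    have h6 : ((⌊R⌋ + 1).toNat : ℝ) ≤ R + 1 := by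
      rcases le_or_gt (⌊R⌋ + 1) 0 with h | h
      · rw [Int.toNat_of_nonpos h]; simpa using by linarith
      · have hcast : (((⌊R⌋ + 1).toNat : ℕ) : ℝ) = ((⌊R⌋ : ℝ) + 1) := by
          rw [← Int.cast_natCast (R := ℝ), Int.toNat_of_nonneg h.le]
          push_cast; ring
        rw [hcast]
        have := Int.floor_le R
        linarith
    calc (A.card : ℝ) ≤ ((⌊R⌋ + 1).toNat : ℝ) := by rw [← h5]; exact_mod_cast hcard
    _ ≤ R + 1 := h6

lemma abs_coord_le_norm (p : Plane) (i : Fin 2) : |p i| ≤ ‖p‖ := by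
  rw [EuclideanSpace.norm_eq]
  have h1 : |p i| = Real.sqrt (‖p i‖ ^ 2) := by
    rw [Real.sqrt_sq_eq_abs, abs_norm, Real.norm_eq_abs]
  rw [h1]
  apply Real.sqrt_le_sqrt
  exact Finset.single_le_sum (f := fun j => ‖p j‖ ^ 2) (fun j _ => sq_nonneg _) (Finset.mem_univ i)

lemma dist_sq_eq (p q : Plane) : dist p q ^ 2 = (p 0 - q 0) ^ 2 + (p 1 - q 1) ^ 2 := by
  rw [EuclideanSpace.dist_eq, Real.sq_sqrt (by positivity)]
  simp [Fin.sum_univ_two, Real.dist_eq, sq_abs]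

lemma tube_window {δ : ℝ} (hδ : 0 < δ) {p : Plane} (hp : |p 0| ≤ 1) {c : ℝ × ℝ}
    (h : p ∈ tube δ c) : |p 1 - c.1 * p 0 - c.2| ≤ 2 * δ := by
  obtain ⟨u, hu, v, hv, heq⟩ := h
  have h1 : |u - c.1| ≤ δ := by
    rw [abs_le]; exact ⟨by linarith [hu.1], by linarith [hu.2]⟩
  have h2 : |v - c.2| ≤ δ := by
    rw [abs_le]; exact ⟨by linarith [hv.1], by linarith [hv.2]⟩
  have h3 : p 1 - c.1 * p 0 - c.2 = (u - c.1) * p 0 + (v - c.2) := by rw [heq]; ring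
  rw [h3]
  calc |(u - c.1) * p 0 + (v - c.2)| ≤ |(u - c.1) * p 0| + |v - c.2| := abs_add_le _ _
  _ ≤ |u - c.1| * |p 0| + δ := by rw [abs_mul]; linarith
  _ ≤ δ * 1 + δ := by
      have : |u - c.1| * |p 0| ≤ δ * 1 := mul_le_mul h1 hp (abs_nonneg _) hδ.le
      linarith
  _ = 2 * δ := by ring

lemma corner_floor {δ : ℝ} (hδ : 0 < δ) {c : ℝ × ℝ} (h : DyadicCorner δ c) :
    ((⌊c.1/δ⌋ : ℝ) * δ = c.1) ∧ ((⌊c.2/δ⌋ : ℝ) * δ = c.2) := by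
  obtain ⟨m, n, h1, h2⟩ := h
  constructor
  · have hd : c.1 / δ = (m : ℝ) := by rw [h1, mul_div_cancel_right₀ _ hδ.ne']
    rw [hd, Int.floor_intCast]
    exact h1.symm
  · have : c.2 / δ = (n : ℝ) := by rw [h2, mul_div_cancel_right₀ _ hδ.ne']
    rw [this, Int.floor_intCast]
    exact h2.symm

lemma pair_card_bound {δ : ℝ} (hδ : 0 < δ) (p q : Plane)
    (hp : ‖p‖ ≤ 1) (hq : ‖q‖ ≤ 1) (hsep : δ ≤ dist p q)
    (S : Finset (ℝ × ℝ))
    (hS : ∀ c ∈ S, DyadicCornerIn01 δ c ∧ p ∈ tube δ c ∧ q ∈ tube δ c) :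
    (S.card : ℝ) ≤ 200 / dist p q := by
  classical
  have hρ : 0 < dist p q := lt_of_lt_of_le hδ hsep
  set ρ := dist p q with hρdef
  have hρ2 : ρ ≤ 2 := by
    rw [hρdef, dist_eq_norm]
    calc ‖p - q‖ ≤ ‖p‖ + ‖q‖ := norm_sub_le p q
    _ ≤ 2 := by linarith
  have hp0 : |p 0| ≤ 1 := le_trans (abs_coord_le_norm p 0) hp
  have hq0 : |q 0| ≤ 1 := le_trans (abs_coord_le_norm q 0) hq
  have hfl : ∀ c ∈ S, ((⌊c.1/δ⌋ : ℝ) * δ = c.1) ∧ ((⌊c.2/δ⌋ : ℝ) * δ = c.2) :=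
    fun c hc => corner_floor hδ (hS c hc).1.1
  have wp : ∀ c ∈ S, |p 1 - c.1 * p 0 - c.2| ≤ 2 * δ :=
    fun c hc => tube_window hδ hp0 (hS c hc).2.1
  have wq : ∀ c ∈ S, |q 1 - c.1 * q 0 - c.2| ≤ 2 * δ :=
    fun c hc => tube_window hδ hq0 (hS c hc).2.2
  have wpq : ∀ c ∈ S, |(p 1 - q 1) - c.1 * (p 0 - q 0)| ≤ 4 * δ := by
    intro c hc
    have h1 := wp c hc
    have h2 := wq c hc
    have heq : (p 1 - q 1) - c.1 * (p 0 - q 0)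
        = (p 1 - c.1 * p 0 - c.2) - (q 1 - c.1 * q 0 - c.2) := by ring
    rw [heq]
    calc |(p 1 - c.1 * p 0 - c.2) - (q 1 - c.1 * q 0 - c.2)|
        ≤ |p 1 - c.1 * p 0 - c.2| + |q 1 - c.1 * q 0 - c.2| := abs_sub _ _
    _ ≤ 4 * δ := by linarith
  set ψ : ℝ × ℝ → ℤ × ℤ := fun c => (⌊c.1/δ⌋, ⌊c.2/δ⌋ - ⌊(p 1 - c.1 * p 0)/δ⌋) with hψ
  set M : Finset ℤ := S.image (fun c => ⌊c.1/δ⌋) with hM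
  have hinj : Set.InjOn ψ S := by
    intro c hc c' hc' heq
    have h1 : ⌊c.1/δ⌋ = ⌊c'.1/δ⌋ := congrArg Prod.fst heq
    have e1 : c.1 = c'.1 := by
      rw [← (hfl c hc).1, ← (hfl c' hc').1, h1]
    have h2 : ⌊c.2/δ⌋ = ⌊c'.2/δ⌋ := by
      have h2' : ⌊c.2/δ⌋ - ⌊(p 1 - c.1 * p 0)/δ⌋ = ⌊c'.2/δ⌋ - ⌊(p 1 - c'.1 * p 0)/δ⌋ :=
        congrArg Prod.snd heq
      rw [e1] at h2'
      omega
    have e2 : c.2 = c'.2 := by rw [← (hfl c hc).2, ← (hfl c' hc').2, h2]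
    exact Prod.ext e1 e2
  have hmem : ∀ c ∈ S, ψ c ∈ M ×ˢ Finset.Icc (-2 : ℤ) 2 := by
    intro c hc
    rw [Finset.mem_product]
    refine ⟨Finset.mem_image_of_mem _ hc, ?_⟩
    rw [Finset.mem_Icc]
    show -2 ≤ ⌊c.2/δ⌋ - ⌊(p 1 - c.1 * p 0)/δ⌋ ∧ ⌊c.2/δ⌋ - ⌊(p 1 - c.1 * p 0)/δ⌋ ≤ 2
    have hw : |(p 1 - c.1 * p 0) - (⌊c.2/δ⌋ : ℝ) * δ| ≤ 2 * δ := by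
      rw [(hfl c hc).2]
      have := wp c hc
      have heq : p 1 - c.1 * p 0 - c.2 = p 1 - c.1 * p 0 - c.2 := rfl
      calc |(p 1 - c.1 * p 0) - c.2| = |p 1 - c.1 * p 0 - c.2| := by ring_nf
      _ ≤ 2 * δ := this
    rw [abs_le] at hw
    have hup : ⌊c.2/δ⌋ - 2 ≤ ⌊(p 1 - c.1 * p 0)/δ⌋ := by
      apply Int.le_floor.mpr
      push_cast
      rw [le_div_iff₀ hδ]
      linarith [hw.1]
    have hlo : ⌊(p 1 - c.1 * p 0)/δ⌋ ≤ ⌊c.2/δ⌋ + 2 := by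
      have h1 : (p 1 - c.1 * p 0)/δ ≤ ((⌊c.2/δ⌋ + 2 : ℤ) : ℝ) := by
        push_cast
        rw [div_le_iff₀ hδ]
        nlinarith [hw.2]
      calc ⌊(p 1 - c.1 * p 0)/δ⌋ ≤ ⌊((⌊c.2/δ⌋ + 2 : ℤ) : ℝ)⌋ := Int.floor_le_floor h1
      _ = ⌊c.2/δ⌋ + 2 := Int.floor_intCast _
    omega
  have hcard1 : (S.card : ℝ) ≤ (M.card : ℝ) * 5 := by
    have h1 : S.card = (S.image ψ).card := (Finset.card_image_of_injOn hinj).symm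
    have h2 : (S.image ψ) ⊆ M ×ˢ Finset.Icc (-2:ℤ) 2 := by
      intro x hx
      obtain ⟨c, hc, rfl⟩ := Finset.mem_image.mp hx
      exact hmem c hc
    have h3 : (S.image ψ).card ≤ (M ×ˢ Finset.Icc (-2:ℤ) 2).card := Finset.card_le_card h2
    have h4 : (M ×ˢ Finset.Icc (-2:ℤ) 2).card = M.card * 5 := by
      have h5 : ((2:ℤ) + 1 - -2).toNat = 5 := rfl
      rw [Finset.card_product, Int.card_Icc, h5]
    rw [h1]
    exact_mod_cast h4 ▸ h3
  have hfinish : ∀ R : ℝ, 0 ≤ R → (∀ a ∈ M, ∀ b ∈ M, |(a:ℝ) - b| ≤ R/ρ)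
      → (S.card : ℝ) ≤ (R + 2) / ρ * 5 := by
    intro R hR hwin
    have h1 : (M.card : ℝ) ≤ R/ρ + 1 := card_int_window M (R/ρ) (by positivity) hwin
    have h2 : (1 : ℝ) ≤ 2/ρ := by
      rw [le_div_iff₀ hρ]; linarith
    calc (S.card : ℝ) ≤ (M.card : ℝ) * 5 := hcard1
    _ ≤ (R/ρ + 2/ρ) * 5 := by nlinarith
    _ = (R + 2)/ρ * 5 := by ring
  by_cases hx : ρ/4 ≤ |p 0 - q 0|
  · -- transversal case
    have hwin : ∀ a ∈ M, ∀ b ∈ M, |(a:ℝ) - b| ≤ 32/ρ := by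
      intro a ha b hb
      obtain ⟨c, hc, rfl⟩ := Finset.mem_image.mp ha
      obtain ⟨c', hc', rfl⟩ := Finset.mem_image.mp hb
      have h1 := wpq c hc
      have h2 := wpq c' hc'
      have h3 : |(c.1 - c'.1) * (p 0 - q 0)| ≤ 8 * δ := by
        have heq : (c.1 - c'.1) * (p 0 - q 0)
            = ((p 1 - q 1) - c'.1 * (p 0 - q 0)) - ((p 1 - q 1) - c.1 * (p 0 - q 0)) := by
          ring
        rw [heq]
        calc |((p 1 - q 1) - c'.1 * (p 0 - q 0)) - ((p 1 - q 1) - c.1 * (p 0 - q 0))|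
            ≤ |(p 1 - q 1) - c'.1 * (p 0 - q 0)| + |(p 1 - q 1) - c.1 * (p 0 - q 0)| :=
            abs_sub _ _
        _ ≤ 8 * δ := by linarith
      rw [abs_mul] at h3
      have e : ((⌊c.1/δ⌋ : ℝ) - (⌊c'.1/δ⌋ : ℝ)) * δ = c.1 - c'.1 := by
        rw [sub_mul, (hfl c hc).1, (hfl c' hc').1]
      have h5 : |c.1 - c'.1| = |(⌊c.1/δ⌋ : ℝ) - (⌊c'.1/δ⌋ : ℝ)| * δ := by
        rw [← e, abs_mul, abs_of_pos hδ]
      rw [h5] at h3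
      have h6 : |(⌊c.1/δ⌋ : ℝ) - (⌊c'.1/δ⌋ : ℝ)| * |p 0 - q 0| ≤ 8 := by
        have hδ' : |(⌊c.1/δ⌋ : ℝ) - (⌊c'.1/δ⌋ : ℝ)| * δ * |p 0 - q 0|
            = (|(⌊c.1/δ⌋ : ℝ) - (⌊c'.1/δ⌋ : ℝ)| * |p 0 - q 0|) * δ := by ring
        rw [hδ'] at h3
        exact le_of_mul_le_mul_right (by linarith) hδ
      rw [le_div_iff₀ hρ]
      nlinarith [abs_nonneg ((⌊c.1/δ⌋ : ℝ) - (⌊c'.1/δ⌋ : ℝ))]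
    calc (S.card : ℝ) ≤ (32 + 2)/ρ * 5 := hfinish 32 (by norm_num) hwin
    _ ≤ 200 / ρ := by
      rw [div_mul_eq_mul_div, div_le_div_iff₀ hρ hρ]
      nlinarith
  · -- near-vertical separation forces ρ ≤ 8δ
    push_neg at hx
    rcases S.eq_empty_or_nonempty with rfl | ⟨c0, hc0⟩
    · simp
      positivity
    have hρ8 : ρ ≤ 8 * δ := by
      have h1 := wpq c0 hc0
      have hc01 : (0:ℝ) ≤ c0.1 ∧ c0.1 < 1 := ⟨(hS c0 hc0).1.2.1.1, (hS c0 hc0).1.2.1.2⟩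
      have h2 : |p 1 - q 1| ≤ ρ/4 + 4*δ := by
        have h2a : |c0.1 * (p 0 - q 0)| ≤ ρ/4 := by
          rw [abs_mul, abs_of_nonneg hc01.1]
          nlinarith [abs_nonneg (p 0 - q 0), hx]
        calc |p 1 - q 1|
            = |((p 1 - q 1) - c0.1 * (p 0 - q 0)) + c0.1 * (p 0 - q 0)| := by ring_nf
        _ ≤ |(p 1 - q 1) - c0.1 * (p 0 - q 0)| + |c0.1 * (p 0 - q 0)| := abs_add_le _ _
        _ ≤ ρ/4 + 4*δ := by linarith
      have h3 : ρ^2 = (p 0 - q 0)^2 + (p 1 - q 1)^2 := by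
        rw [hρdef]; exact dist_sq_eq p q
      have h4 : (3/4) * ρ ≤ |p 1 - q 1| := by
        nlinarith [sq_abs (p 1 - q 1), sq_abs (p 0 - q 0), abs_nonneg (p 1 - q 1),
          abs_nonneg (p 0 - q 0), sq_nonneg (|p 1 - q 1| - 3/4 * ρ),
          sq_nonneg (|p 1 - q 1| + 3/4 * ρ)]
      linarith
    have hwin : ∀ a ∈ M, ∀ b ∈ M, |(a:ℝ) - b| ≤ 8/ρ := by
      intro a ha b hb
      obtain ⟨c, hc, rfl⟩ := Finset.mem_image.mp ha
      obtain ⟨c', hc', rfl⟩ := Finset.mem_image.mp hb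
      have hc1 : (0:ℝ) ≤ c.1 ∧ c.1 < 1 := ⟨(hS c hc).1.2.1.1, (hS c hc).1.2.1.2⟩
      have hc1' : (0:ℝ) ≤ c'.1 ∧ c'.1 < 1 := ⟨(hS c' hc').1.2.1.1, (hS c' hc').1.2.1.2⟩
      have e : ((⌊c.1/δ⌋ : ℝ) - (⌊c'.1/δ⌋ : ℝ)) * δ = c.1 - c'.1 := by
        rw [sub_mul, (hfl c hc).1, (hfl c' hc').1]
      have h5 : |(⌊c.1/δ⌋ : ℝ) - (⌊c'.1/δ⌋ : ℝ)| * δ = |c.1 - c'.1| := by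
        rw [← e, abs_mul, abs_of_pos hδ]
      have h6 : |c.1 - c'.1| ≤ 1 := by
        rw [abs_le]; constructor <;> [linarith [hc1.1, hc1'.2]; linarith [hc1.2, hc1'.1]]
      have h7 : |(⌊c.1/δ⌋ : ℝ) - (⌊c'.1/δ⌋ : ℝ)| ≤ 1/δ := by
        rw [le_div_iff₀ hδ]
        rw [h5]
        exact h6
      calc |(⌊c.1/δ⌋ : ℝ) - (⌊c'.1/δ⌋ : ℝ)| ≤ 1/δ := h7
      _ ≤ 8/ρ := by
        rw [div_le_div_iff₀ hδ hρ]
        linarith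
    calc (S.card : ℝ) ≤ (8 + 2)/ρ * 5 := hfinish 8 (by norm_num) hwin
    _ ≤ 200 / ρ := by
      rw [div_mul_eq_mul_div, div_le_div_iff₀ hρ hρ]
      nlinarith

lemma inv_le_dyadic_sum {ρ : ℝ} {k : ℕ} (hρk : (2:ℝ)^(-(k:ℤ)) ≤ ρ) :
    1 / ρ ≤ 1 + ∑ i ∈ Finset.range (k+1),
      (if ρ ≤ (2:ℝ)^(-(i:ℤ)) then (2:ℝ)^(i+1) else 0) := by
  classical
  have hρ : 0 < ρ := lt_of_lt_of_le (by positivity) hρk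
  have hterm : ∀ i ∈ Finset.range (k+1),
      (0:ℝ) ≤ (if ρ ≤ (2:ℝ)^(-(i:ℤ)) then (2:ℝ)^(i+1) else 0) := by
    intro i _; split <;> positivity
  by_cases h1 : 1 < ρ
  · have ha : 1/ρ ≤ 1 := by rw [div_le_one hρ]; linarith
    have hb : (0:ℝ) ≤ ∑ i ∈ Finset.range (k+1),
        (if ρ ≤ (2:ℝ)^(-(i:ℤ)) then (2:ℝ)^(i+1) else 0) := Finset.sum_nonneg hterm
    linarith
  push_neg at h1
  set Q : ℕ → Prop := fun i => ρ ≤ (2:ℝ)^(-(i:ℤ)) with hQ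
  have hQ0 : Q 0 := by simp [hQ]; exact h1
  set j := Nat.findGreatest Q k with hj
  have hjk : j ≤ k := Nat.findGreatest_le k
  have hQj : Q j := Nat.findGreatest_spec (Nat.zero_le k) hQ0
  have hub : 1/ρ ≤ (2:ℝ)^(j+1) := by
    rcases eq_or_lt_of_le hjk with heq | hlt
    · have hk1 : 1/ρ ≤ (2:ℝ)^(k:ℕ) := by
        rw [div_le_iff₀ hρ]
        have hz : (2:ℝ)^(-(k:ℤ)) * (2:ℝ)^(k:ℕ) = 1 := by
          rw [← zpow_natCast (2:ℝ) k, ← zpow_add₀ (by norm_num : (2:ℝ) ≠ 0)]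
          simp
        calc (1:ℝ) = (2:ℝ)^(-(k:ℤ)) * (2:ℝ)^(k:ℕ) := hz.symm
        _ ≤ ρ * 2^(k:ℕ) := mul_le_mul_of_nonneg_right hρk (by positivity)
        _ = 2^(k:ℕ) * ρ := by ring
      calc 1/ρ ≤ (2:ℝ)^(k:ℕ) := hk1
      _ ≤ 2^(j+1) := by
          apply pow_le_pow_right₀ (by norm_num)
          omega
    · have hnot : ¬ Q (j+1) :=
        Nat.findGreatest_is_greatest (P := Q) (n := k) (k := j+1) (by omega) (by omega)
      have hlt2 : (2:ℝ)^(-((j+1:ℕ):ℤ)) < ρ := lt_of_not_ge hnot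
      have hz : (2:ℝ)^(-((j+1:ℕ):ℤ)) * (2:ℝ)^((j+1:ℕ)) = 1 := by
        rw [← zpow_natCast (2:ℝ) (j+1), ← zpow_add₀ (by norm_num : (2:ℝ) ≠ 0),
          neg_add_cancel, zpow_zero]
      rw [div_le_iff₀ hρ]
      nlinarith [pow_pos (by norm_num : (0:ℝ) < 2) (j+1)]
  have hsub : Finset.range (j+1) ⊆ Finset.range (k+1) := by
    intro i hi; simp at hi ⊢; omega
  have hsum_ge : ∑ i ∈ Finset.range (j+1), (2:ℝ)^(i+1)
      ≤ ∑ i ∈ Finset.range (k+1), (if ρ ≤ (2:ℝ)^(-(i:ℤ)) then (2:ℝ)^(i+1) else 0) := by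
    have step : ∑ i ∈ Finset.range (j+1), (2:ℝ)^(i+1)
        = ∑ i ∈ Finset.range (j+1), (if ρ ≤ (2:ℝ)^(-(i:ℤ)) then (2:ℝ)^(i+1) else 0) := by
      apply Finset.sum_congr rfl
      intro i hi
      rw [if_pos]
      have hij : i ≤ j := by simp at hi; omega
      have : (2:ℝ)^(-(j:ℤ)) ≤ (2:ℝ)^(-(i:ℤ)) := by
        apply zpow_le_zpow_right₀ (by norm_num)
        omega
      exact le_trans hQj this
    rw [step]
    apply Finset.sum_le_sum_of_subset_of_nonneg hsub
    intro i hi _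
    split <;> positivity
  have hgeom : ∑ i ∈ Finset.range (j+1), (2:ℝ)^(i+1) = 2^(j+2) - 2 := by
    have : ∑ i ∈ Finset.range (j+1), (2:ℝ)^(i+1)
        = 2 * ∑ i ∈ Finset.range (j+1), (2:ℝ)^i := by
      rw [Finset.mul_sum]
      apply Finset.sum_congr rfl
      intro i _
      ring
    rw [this, geom_sum_eq (by norm_num : (2:ℝ) ≠ 1)]
    ring
  have h2 : (2:ℝ)^(j+2) = 2 * 2^(j+1) := by ring
  have h3 : (2:ℝ) ≤ 2^(j+1) := by
    calc (2:ℝ) = 2^1 := (pow_one 2).symm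
    _ ≤ 2^(j+1) := pow_le_pow_right₀ (by norm_num) (by omega)
  linarith

lemma sum_inv_dist_bound {δ ε : ℝ} {k : ℕ} (hδk : δ = (2:ℝ)^(-(k:ℤ)))
    {P : Set Plane} (hPb : P ⊆ Metric.closedBall (0:Plane) 1)
    (hfin : P.Finite) (hsep : ∀ p ∈ P, ∀ q ∈ P, p ≠ q → δ ≤ dist p q)
    (hcnt : ∀ (x : Plane) (r : ℝ), δ ≤ r → r ≤ 1 →
      ((P ∩ Metric.closedBall x r).ncard : ℝ) ≤ δ^(-ε) * (r/δ)^(1:ℝ))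
    (p : Plane) (hp : p ∈ P) :
    ∑ q ∈ hfin.toFinset.erase p, 1 / dist p q ≤ (2*(k:ℝ)+3) * (δ^(-ε) / δ) := by
  classical
  have hδ0 : 0 < δ := by rw [hδk]; positivity
  have hδ1 : δ ≤ 1 := by
    rw [hδk]
    have h : (2:ℝ)^(-(k:ℤ)) ≤ (2:ℝ)^(0:ℤ) := by
      apply zpow_le_zpow_right₀ (by norm_num)
      omega
    simpa using h
  set E := hfin.toFinset.erase p with hE
  have hEP : ∀ q ∈ E, q ∈ P ∧ q ≠ p := by
    intro q hq
    rw [hE, Finset.mem_erase, Set.Finite.mem_toFinset] at hq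
    exact ⟨hq.2, hq.1⟩
  -- ball counting
  have hball : ∀ r : ℝ, δ ≤ r → r ≤ 1 →
      ((E.filter (fun q => dist p q ≤ r)).card : ℝ) ≤ δ^(-ε) * (r/δ) := by
    intro r hr1 hr2
    have hsub : ↑(E.filter (fun q => dist p q ≤ r)) ⊆ P ∩ Metric.closedBall p r := by
      intro q hq
      simp only [Finset.coe_filter, Set.mem_setOf_eq] at hq
      refine ⟨(hEP q hq.1).1, ?_⟩
      rw [Metric.mem_closedBall, dist_comm]
      exact hq.2
    have h1 : ((E.filter (fun q => dist p q ≤ r)).card : ℝ)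
        ≤ ((P ∩ Metric.closedBall p r).ncard : ℝ) := by
      have := Set.ncard_le_ncard hsub (Set.Finite.subset hfin Set.inter_subset_left)
      rw [← Set.ncard_coe_finset]
      exact_mod_cast this
    calc ((E.filter (fun q => dist p q ≤ r)).card : ℝ)
        ≤ ((P ∩ Metric.closedBall p r).ncard : ℝ) := h1
    _ ≤ δ^(-ε) * (r/δ)^(1:ℝ) := hcnt p r hr1 hr2
    _ = δ^(-ε) * (r/δ) := by rw [Real.rpow_one]
  -- total count
  have htotal : ((E.card) : ℝ) ≤ δ^(-ε) / δ := by
    have hsub : (↑E : Set Plane) ⊆ P ∩ Metric.closedBall (0:Plane) 1 := by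
      intro q hq
      have := (hEP q hq).1
      exact ⟨this, hPb this⟩
    have h1 : ((E.card) : ℝ) ≤ ((P ∩ Metric.closedBall (0:Plane) 1).ncard : ℝ) := by
      have := Set.ncard_le_ncard hsub (Set.Finite.subset hfin Set.inter_subset_left)
      rw [← Set.ncard_coe_finset]
      exact_mod_cast this
    calc ((E.card) : ℝ) ≤ ((P ∩ Metric.closedBall (0:Plane) 1).ncard : ℝ) := h1
    _ ≤ δ^(-ε) * ((1:ℝ)/δ)^(1:ℝ) := hcnt 0 1 hδ1 le_rfl
    _ = δ^(-ε) / δ := by rw [Real.rpow_one]; ring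
  -- pointwise dyadic bound and summation
  have hpoint : ∀ q ∈ E, 1 / dist p q ≤ 1 + ∑ i ∈ Finset.range (k+1),
      (if dist p q ≤ (2:ℝ)^(-(i:ℤ)) then (2:ℝ)^(i+1) else 0) := by
    intro q hq
    apply inv_le_dyadic_sum
    rw [← hδk]
    rw [dist_comm]
    exact hsep q (hEP q hq).1 p hp (hEP q hq).2
  calc ∑ q ∈ E, 1 / dist p q
      ≤ ∑ q ∈ E, (1 + ∑ i ∈ Finset.range (k+1),
        (if dist p q ≤ (2:ℝ)^(-(i:ℤ)) then (2:ℝ)^(i+1) else 0)) :=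
      Finset.sum_le_sum hpoint
  _ = (E.card : ℝ) + ∑ i ∈ Finset.range (k+1), ∑ q ∈ E,
        (if dist p q ≤ (2:ℝ)^(-(i:ℤ)) then (2:ℝ)^(i+1) else 0) := by
      rw [Finset.sum_add_distrib, Finset.sum_const, Finset.sum_comm]
      simp
  _ ≤ δ^(-ε)/δ + ∑ i ∈ Finset.range (k+1), 2 * (δ^(-ε)/δ) := by
      apply add_le_add htotal
      apply Finset.sum_le_sum
      intro i hi
      have hik : i ≤ k := by simp at hi; omega
      have hri1 : δ ≤ (2:ℝ)^(-(i:ℤ)) := by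
        rw [hδk]
        apply zpow_le_zpow_right₀ (by norm_num)
        omega
      have hri2 : (2:ℝ)^(-(i:ℤ)) ≤ 1 := by
        have h : (2:ℝ)^(-(i:ℤ)) ≤ (2:ℝ)^(0:ℤ) := by
          apply zpow_le_zpow_right₀ (by norm_num)
          omega
        simpa using h
      have hsum : ∑ q ∈ E, (if dist p q ≤ (2:ℝ)^(-(i:ℤ)) then (2:ℝ)^(i+1) else 0)
          = ((E.filter (fun q => dist p q ≤ (2:ℝ)^(-(i:ℤ)))).card : ℝ) * (2:ℝ)^(i+1) := by
        rw [Finset.sum_ite, Finset.sum_const, Finset.sum_const_zero, add_zero, nsmul_eq_mul]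
      rw [hsum]
      have hb := hball ((2:ℝ)^(-(i:ℤ))) hri1 hri2
      have hpow : ((2:ℝ)^(-(i:ℤ))/δ) * (2:ℝ)^(i+1) = 2 / δ := by
        rw [div_mul_eq_mul_div]
        congr 1
        rw [← zpow_natCast (2:ℝ) (i+1), ← zpow_add₀ (by norm_num : (2:ℝ) ≠ 0)]
        push_cast
        ring_nf
        norm_num
      have hpos : (0:ℝ) < (2:ℝ)^(i+1) := by positivity
      calc ((E.filter (fun q => dist p q ≤ (2:ℝ)^(-(i:ℤ)))).card : ℝ) * (2:ℝ)^(i+1)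
          ≤ (δ^(-ε) * ((2:ℝ)^(-(i:ℤ))/δ)) * (2:ℝ)^(i+1) :=
          mul_le_mul_of_nonneg_right hb hpos.le
      _ = δ^(-ε) * (((2:ℝ)^(-(i:ℤ))/δ) * (2:ℝ)^(i+1)) := by ring
      _ = δ^(-ε) * (2/δ) := by rw [hpow]
      _ = 2 * (δ^(-ε)/δ) := by ring
  _ = δ^(-ε)/δ + (k+1) * (2 * (δ^(-ε)/δ)) := by
      rw [Finset.sum_const, Finset.card_range, nsmul_eq_mul]
      push_cast
      ring
  _ = (2*(k:ℝ)+3) * (δ^(-ε) / δ) := by ring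

set_option maxHeartbeats 2000000

/-- Lemma `2sBound` of the paper: the "trivial" incidence lower bound
`|𝓣| ≳ (log(1/δ))^{-C} δ^{-2s+6ε}`. Dyadic `δ`-tubes are encoded by the lower-left
corners `c ∈ (δℤ)² ∩ [0,1)²` of the dyadic squares defining them. -/
theorem incidence_trivial_bound :
    ∀ s : ℝ, 0 < s → s < 1 →
      ∃ ε₀ : ℝ, 0 < ε₀ ∧
        ∃ c : ℝ, 0 < c ∧
          ∃ C : ℝ, 1 ≤ C ∧
            ∀ ε : ℝ, 0 < ε → ε ≤ ε₀ →
              ∀ (k : ℕ) (δ : ℝ), δ = (2 : ℝ) ^ (-(k : ℤ)) → δ < 1/2 →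
                ∀ (P : Set Plane) (𝓣 : Set (ℝ × ℝ)),
                  P ⊆ Metric.ball (0 : Plane) 1 →
                  IsDeltaSet δ 1 (δ ^ (-ε)) P →
                  δ ^ (-(1 : ℝ) + ε) ≤ (P.ncard : ℝ) →
                  𝓣.Finite →
                  (∀ cr ∈ 𝓣, DyadicCornerIn01 δ cr) →
                  (∀ p ∈ P, ∃ 𝓣p ⊆ 𝓣,
                    (∀ cr ∈ 𝓣p, p ∈ tube δ cr) ∧ δ ^ (-s + ε) ≤ (𝓣p.ncard : ℝ)) →
                  c * (Real.log (1/δ)) ^ (-C) * δ ^ (-2*s + 6*ε) ≤ (𝓣.ncard : ℝ) := by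
  intro s hs0 hs1
  refine ⟨1, one_pos, 1/4000, by norm_num, 1, le_rfl, ?_⟩
  intro ε hε0 hε1 k δ hδk hδhalf P 𝓣 hPb hDS hPcard h𝓣fin h𝓣corner hcover
  classical
  obtain ⟨hPfin, hPsep, hPcnt⟩ := hDS
  have hδ0 : 0 < δ := by rw [hδk]; positivity
  have hδ1 : δ ≤ 1 := by linarith only [hδhalf]
  have hk2 : 2 ≤ k := by
    by_contra hcon
    push_neg at hcon
    interval_cases k
    · rw [hδk] at hδhalf; norm_num at hδhalf
    · rw [hδk] at hδhalf; norm_num at hδhalf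
  have hkR : (2:ℝ) ≤ (k:ℝ) := by exact_mod_cast hk2
  have hPb' : P ⊆ Metric.closedBall (0:Plane) 1 :=
    subset_trans hPb Metric.ball_subset_closedBall
  -- choose the tube families
  choose! T hTsub hTprop using hcover
  set Pf : Finset Plane := hPfin.toFinset with hPfdef
  set Tf : Finset (ℝ × ℝ) := h𝓣fin.toFinset with hTfdef
  set A : Plane → Finset (ℝ × ℝ) := fun p =>
    if h : p ∈ P then (Set.Finite.subset h𝓣fin (hTsub p h)).toFinset else ∅ with hAdef
  have hPfmem : ∀ p, p ∈ Pf ↔ p ∈ P := fun p => Set.Finite.mem_toFinset hPfin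
  have hAmem : ∀ p ∈ P, ∀ c : ℝ × ℝ, (c ∈ A p ↔ c ∈ T p) := by
    intro p hp c
    simp only [hAdef, dif_pos hp, Set.Finite.mem_toFinset]
  have hA3 : ∀ p ∈ Pf, A p ⊆ Tf := by
    intro p hp c hc
    have hpP := (hPfmem p).mp hp
    rw [hTfdef, Set.Finite.mem_toFinset]
    exact hTsub p hpP ((hAmem p hpP c).mp hc)
  have hA1 : ∀ p ∈ Pf, ∀ c ∈ A p, DyadicCornerIn01 δ c ∧ p ∈ tube δ c := by
    intro p hp c hc
    have hpP := (hPfmem p).mp hp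
    have hcT : c ∈ T p := (hAmem p hpP c).mp hc
    exact ⟨h𝓣corner c (hTsub p hpP hcT), (hTprop p hpP).1 c hcT⟩
  have hA2 : ∀ p ∈ Pf, δ^(-s+ε) ≤ ((A p).card : ℝ) := by
    intro p hp
    have hpP := (hPfmem p).mp hp
    have h1 := (hTprop p hpP).2
    have hcard : (T p).ncard = (A p).card := by
      simp only [hAdef, dif_pos hpP]
      exact Set.ncard_eq_toFinset_card _ _
    rw [← hcard]
    exact h1
  -- basic quantities
  set n : ℝ := (Pf.card : ℝ) with hndef
  set m : ℝ := δ^(-s+ε) with hmdef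
  have hm0 : 0 < m := by rw [hmdef]; exact Real.rpow_pos_of_pos hδ0 _
  have hn1 : δ^(-(1:ℝ)+ε) ≤ n := by
    rw [hndef, hPfdef, ← Set.ncard_eq_toFinset_card P hPfin]
    exact hPcard
  have hn0 : 0 < n := lt_of_lt_of_le (Real.rpow_pos_of_pos hδ0 _) hn1
  have hq1 : (0:ℝ) ≤ δ^(-ε)/δ := div_nonneg (Real.rpow_nonneg hδ0.le _) hδ0.le
  have hn_up : n ≤ δ^(-ε)/δ := by
    have hinter : P ∩ Metric.closedBall (0:Plane) 1 = P :=
      Set.inter_eq_self_of_subset_left hPb'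
    have h1 := hPcnt 0 1 hδ1 le_rfl
    rw [hinter] at h1
    have h2 : δ^(-ε) * ((1:ℝ)/δ)^(1:ℝ) = δ^(-ε)/δ := by rw [Real.rpow_one]; ring
    rw [hndef, hPfdef, ← Set.ncard_eq_toFinset_card P hPfin]
    rw [h2] at h1
    exact h1
  set I : ℝ := ∑ p ∈ Pf, ((A p).card : ℝ) with hIdef
  have hnmI : n * m ≤ I := by
    rw [hIdef]
    have h1 : n * m = ∑ _p ∈ Pf, m := by rw [Finset.sum_const, nsmul_eq_mul, hndef]
    rw [h1]
    exact Finset.sum_le_sum hA2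
  have hI0 : 0 < I := lt_of_lt_of_le (mul_pos hn0 hm0) hnmI
  set μ : ℝ × ℝ → ℝ := fun t => ((Pf.filter (fun p => t ∈ A p)).card : ℝ) with hμdef
  have hμ_eq : ∀ t, μ t = ∑ p ∈ Pf, (if t ∈ A p then (1:ℝ) else 0) := by
    intro t
    rw [hμdef, Finset.sum_boole]
  -- identity 1
  have hI1 : ∑ t ∈ Tf, μ t = I := by
    calc ∑ t ∈ Tf, μ t = ∑ t ∈ Tf, ∑ p ∈ Pf, (if t ∈ A p then (1:ℝ) else 0) :=
          Finset.sum_congr rfl (fun t _ => hμ_eq t)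
    _ = ∑ p ∈ Pf, ∑ t ∈ Tf, (if t ∈ A p then (1:ℝ) else 0) := Finset.sum_comm
    _ = ∑ p ∈ Pf, ((A p).card : ℝ) := by
          apply Finset.sum_congr rfl
          intro p hp
          rw [Finset.sum_boole]
          congr 1
          rw [Finset.filter_mem_eq_inter]
          exact congrArg Finset.card (Finset.inter_eq_right.mpr (hA3 p hp))
  -- identity 2
  have hI2 : ∑ t ∈ Tf, μ t ^ 2 = ∑ p ∈ Pf, ∑ q ∈ Pf, ((A p ∩ A q).card : ℝ) := by
    have hsq : ∀ t, μ t ^ 2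
        = ∑ p ∈ Pf, ∑ q ∈ Pf, (if t ∈ A p ∩ A q then (1:ℝ) else 0) := by
      intro t
      rw [sq, hμ_eq t, Finset.sum_mul_sum]
      apply Finset.sum_congr rfl
      intro p _
      apply Finset.sum_congr rfl
      intro q _
      by_cases h1 : t ∈ A p <;> by_cases h2 : t ∈ A q <;>
        simp [h1, h2, Finset.mem_inter]
    calc ∑ t ∈ Tf, μ t ^ 2
        = ∑ t ∈ Tf, ∑ p ∈ Pf, ∑ q ∈ Pf, (if t ∈ A p ∩ A q then (1:ℝ) else 0) :=
          Finset.sum_congr rfl (fun t _ => hsq t)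
    _ = ∑ p ∈ Pf, ∑ t ∈ Tf, ∑ q ∈ Pf, (if t ∈ A p ∩ A q then (1:ℝ) else 0) :=
          Finset.sum_comm
    _ = ∑ p ∈ Pf, ∑ q ∈ Pf, ∑ t ∈ Tf, (if t ∈ A p ∩ A q then (1:ℝ) else 0) :=
          Finset.sum_congr rfl (fun p _ => Finset.sum_comm)
    _ = ∑ p ∈ Pf, ∑ q ∈ Pf, ((A p ∩ A q).card : ℝ) := by
          apply Finset.sum_congr rfl
          intro p hp
          apply Finset.sum_congr rfl
          intro q _
          rw [Finset.sum_boole]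
          congr 1
          rw [Finset.filter_mem_eq_inter]
          apply congrArg Finset.card
          apply Finset.inter_eq_right.mpr
          exact subset_trans (Finset.inter_subset_left) (hA3 p hp)
  -- Cauchy-Schwarz
  set N : ℝ := (Tf.card : ℝ) with hNdef
  have hN0 : (0:ℝ) ≤ N := by rw [hNdef]; positivity
  have hCS : I^2 ≤ N * ∑ t ∈ Tf, μ t ^ 2 := by
    have h := Finset.sum_mul_sq_le_sq_mul_sq Tf (fun _ => (1:ℝ)) μ
    simp only [one_pow, one_mul, Finset.sum_const, nsmul_eq_mul, mul_one] at h
    rw [hI1] at h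
    exact h
  -- diagonal split
  set W : ℝ := ∑ p ∈ Pf, ∑ q ∈ Pf.erase p, ((A p ∩ A q).card : ℝ) with hWdef
  have hsplit : ∑ p ∈ Pf, ∑ q ∈ Pf, ((A p ∩ A q).card : ℝ) = I + W := by
    rw [hWdef, hIdef, ← Finset.sum_add_distrib]
    apply Finset.sum_congr rfl
    intro p hp
    rw [← Finset.add_sum_erase Pf _ hp, Finset.inter_self]
  have hW0 : 0 ≤ W := by
    rw [hWdef]
    apply Finset.sum_nonneg
    intro p _
    apply Finset.sum_nonneg
    intro q _
    positivity
  -- bound on W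
  have hWb : W ≤ (δ^(-ε)/δ) * (200 * ((2*(k:ℝ)+3) * (δ^(-ε)/δ))) := by
    have hper : ∀ p ∈ Pf, ∑ q ∈ Pf.erase p, ((A p ∩ A q).card : ℝ)
        ≤ 200 * ((2*(k:ℝ)+3) * (δ^(-ε)/δ)) := by
      intro p hp
      have hpP := (hPfmem p).mp hp
      have hpnorm : ‖p‖ ≤ 1 := (mem_ball_zero_iff.mp (hPb hpP)).le
      have step1 : ∑ q ∈ Pf.erase p, ((A p ∩ A q).card : ℝ)
          ≤ ∑ q ∈ Pf.erase p, 200 * (1/dist p q) := by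
        apply Finset.sum_le_sum
        intro q hq
        have hqP : q ∈ P := (hPfmem q).mp (Finset.mem_of_mem_erase hq)
        have hqne : q ≠ p := Finset.ne_of_mem_erase hq
        have hqnorm : ‖q‖ ≤ 1 := (mem_ball_zero_iff.mp (hPb hqP)).le
        have hdist : δ ≤ dist p q := hPsep p hpP q hqP (Ne.symm hqne)
        have hSfact : ∀ c ∈ A p ∩ A q,
            DyadicCornerIn01 δ c ∧ p ∈ tube δ c ∧ q ∈ tube δ c := by
          intro c hc
          rw [Finset.mem_inter] at hc
          have hq' : q ∈ Pf := Finset.mem_of_mem_erase hq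
          exact ⟨(hA1 p hp c hc.1).1, (hA1 p hp c hc.1).2, (hA1 q hq' c hc.2).2⟩
        have hb := pair_card_bound hδ0 p q hpnorm hqnorm hdist (A p ∩ A q) hSfact
        have hb2 : (200:ℝ) / dist p q = 200 * (1/dist p q) := by ring
        rw [← hb2]
        exact hb
      have step2 : ∑ q ∈ Pf.erase p, 200 * (1/dist p q)
          = 200 * ∑ q ∈ Pf.erase p, 1/dist p q := by rw [Finset.mul_sum]
      have step3 : (200:ℝ) * ∑ q ∈ Pf.erase p, 1/dist p q
          ≤ 200 * ((2*(k:ℝ)+3) * (δ^(-ε)/δ)) := by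
        apply mul_le_mul_of_nonneg_left _ (by norm_num : (0:ℝ) ≤ 200)
        exact sum_inv_dist_bound hδk hPb' hPfin hPsep hPcnt p hpP
      calc ∑ q ∈ Pf.erase p, ((A p ∩ A q).card : ℝ)
          ≤ ∑ q ∈ Pf.erase p, 200 * (1/dist p q) := step1
      _ = 200 * ∑ q ∈ Pf.erase p, 1/dist p q := step2
      _ ≤ 200 * ((2*(k:ℝ)+3) * (δ^(-ε)/δ)) := step3
    have step4 : W ≤ n * (200 * ((2*(k:ℝ)+3) * (δ^(-ε)/δ))) := by
      rw [hWdef]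
      have h1 : n * (200 * ((2*(k:ℝ)+3) * (δ^(-ε)/δ)))
          = ∑ _p ∈ Pf, 200 * ((2*(k:ℝ)+3) * (δ^(-ε)/δ)) := by
        rw [Finset.sum_const, nsmul_eq_mul, hndef]
      rw [h1]
      exact Finset.sum_le_sum hper
    have step5 : (0:ℝ) ≤ 200 * ((2*(k:ℝ)+3) * (δ^(-ε)/δ)) := by
      apply mul_nonneg (by norm_num)
      apply mul_nonneg _ hq1
      positivity
    calc W ≤ n * (200 * ((2*(k:ℝ)+3) * (δ^(-ε)/δ))) := step4
    _ ≤ (δ^(-ε)/δ) * (200 * ((2*(k:ℝ)+3) * (δ^(-ε)/δ))) :=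
          mul_le_mul_of_nonneg_right hn_up step5
  -- log facts
  set L : ℝ := Real.log (1/δ) with hLdef
  have hLlog : L = (k:ℝ) * Real.log 2 := by
    rw [hLdef, hδk, one_div, ← zpow_neg, neg_neg, Real.log_zpow]
    push_cast
    ring
  have hlog2 : (1/2 : ℝ) ≤ Real.log 2 := by linarith only [Real.log_two_gt_d9]
  have hLk : (k:ℝ)/2 ≤ L := by
    rw [hLlog]
    have h := mul_le_mul_of_nonneg_left hlog2 (by positivity : (0:ℝ) ≤ (k:ℝ))
    linarith only [h]
  have hL1 : 1 ≤ L := by linarith only [hLk, hkR]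
  have hLpos : (0:ℝ) < L := by linarith only [hL1]
  have hLrpow : L ^ (-(1:ℝ)) = L⁻¹ := Real.rpow_neg_one L
  have hLinv1 : L⁻¹ ≤ 1 := by
    rw [inv_le_one_iff₀]
    right; exact hL1
  have hLinv0 : (0:ℝ) ≤ L⁻¹ := by positivity
  -- the target quantity
  have hTcard : (𝓣.ncard : ℝ) = N := by
    rw [hNdef, hTfdef, Set.ncard_eq_toFinset_card 𝓣 h𝓣fin]
  rw [hTcard, hLrpow]
  have hX0 : (0:ℝ) < δ^(-2*s+6*ε) := Real.rpow_pos_of_pos hδ0 _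
  -- main dichotomy
  rcases le_or_gt W I with hWI | hWI
  · -- case A : N ≥ I/2
    have h1 : I^2 ≤ N * (2*I) := by
      have ha : N * ∑ t ∈ Tf, μ t ^ 2 = N * (I + W) := by rw [hI2, hsplit]
      have hb : N * (I + W) ≤ N * (2*I) :=
        mul_le_mul_of_nonneg_left (by linarith only [hWI]) hN0
      calc I^2 ≤ N * ∑ t ∈ Tf, μ t ^ 2 := hCS
      _ = N * (I + W) := ha
      _ ≤ N * (2*I) := hb
    have h2 : I ≤ 2*N := by
      have h2' : I * I ≤ (2*N) * I := by
        calc I * I = I^2 := (sq I).symm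
        _ ≤ N * (2*I) := h1
        _ = (2*N) * I := by ring
      exact le_of_mul_le_mul_right h2' hI0
    have h3 : δ^(-2*s+6*ε) ≤ 2*N := by
      have ha : δ^(-2*s+6*ε) ≤ δ^((-(1:ℝ)+ε) + (-s+ε)) := by
        apply Real.rpow_le_rpow_of_exponent_ge hδ0 hδ1
        linarith only [hs1, hε0]
      have hb : δ^((-(1:ℝ)+ε) + (-s+ε)) = δ^(-(1:ℝ)+ε) * δ^(-s+ε) :=
        Real.rpow_add hδ0 _ _
      have hc : δ^(-(1:ℝ)+ε) * δ^(-s+ε) ≤ n * m := by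
        rw [hmdef]
        exact mul_le_mul hn1 le_rfl (Real.rpow_pos_of_pos hδ0 _).le (le_of_lt hn0)
      linarith only [ha, hb.le, hb.ge, hc, hnmI, h2]
    have h4 : (1/4000 : ℝ) * L⁻¹ ≤ 1/2 := by linarith only [hLinv1, hLinv0]
    calc (1/4000 : ℝ) * L⁻¹ * δ^(-2*s+6*ε) ≤ (1/2) * δ^(-2*s+6*ε) :=
          mul_le_mul_of_nonneg_right h4 hX0.le
    _ ≤ (1/2) * (2*N) := by
          apply mul_le_mul_of_nonneg_left h3
          norm_num
    _ = N := by ring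
  · -- case B : N ≥ I^2/(2W)
    have h1 : I^2 ≤ N * (2*W) := by
      have ha : N * ∑ t ∈ Tf, μ t ^ 2 = N * (I + W) := by rw [hI2, hsplit]
      have hb : N * (I + W) ≤ N * (2*W) :=
        mul_le_mul_of_nonneg_left (by linarith only [hWI]) hN0
      calc I^2 ≤ N * ∑ t ∈ Tf, μ t ^ 2 := hCS
      _ = N * (I + W) := ha
      _ ≤ N * (2*W) := hb
    have h2 : (n*m)^2 ≤ N * (2*W) := by
      have ha : (n*m)^2 ≤ I^2 := pow_le_pow_left₀ (le_of_lt (mul_pos hn0 hm0)) hnmI 2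
      linarith only [ha, h1]
    have h3 : (n*m)^2 ≤ 2 * N * ((δ^(-ε)/δ) * (200 * ((2*(k:ℝ)+3) * (δ^(-ε)/δ)))) := by
      have ha : N * (2*W) = 2*N*W := by ring
      have hb : 2*N*W ≤ 2*N*((δ^(-ε)/δ) * (200 * ((2*(k:ℝ)+3) * (δ^(-ε)/δ)))) := by
        apply mul_le_mul_of_nonneg_left hWb
        linarith only [hN0]
      linarith only [h2, ha.le, ha.ge, hb]
    -- rewrite powers
    have hd1 : δ^(-ε)/δ = δ^(-ε-1) := by
      rw [Real.rpow_sub hδ0, Real.rpow_one]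
    have hlow : δ^(-(2:ℝ)-2*s+4*ε) ≤ (n*m)^2 := by
      have ha : δ^(-(1:ℝ)-s+2*ε) ≤ n*m := by
        have ha1 : δ^(-(1:ℝ)-s+2*ε) = δ^((-(1:ℝ)+ε) + (-s+ε)) := by
          congr 1
          ring
        have ha2 : δ^((-(1:ℝ)+ε) + (-s+ε)) = δ^(-(1:ℝ)+ε) * δ^(-s+ε) :=
          Real.rpow_add hδ0 _ _
        have ha3 : δ^(-(1:ℝ)+ε) * δ^(-s+ε) ≤ n * m := by
          rw [hmdef]
          exact mul_le_mul hn1 le_rfl (Real.rpow_pos_of_pos hδ0 _).le (le_of_lt hn0)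
        linarith only [ha1.le, ha1.ge, ha2.le, ha2.ge, ha3]
      have hb : (0:ℝ) < δ^(-(1:ℝ)-s+2*ε) := Real.rpow_pos_of_pos hδ0 _
      have hc : δ^(-(2:ℝ)-2*s+4*ε) = δ^(-(1:ℝ)-s+2*ε) * δ^(-(1:ℝ)-s+2*ε) := by
        rw [← Real.rpow_add hδ0]
        congr 1
        ring
      calc δ^(-(2:ℝ)-2*s+4*ε) = δ^(-(1:ℝ)-s+2*ε) * δ^(-(1:ℝ)-s+2*ε) := hc
      _ ≤ (n*m) * (n*m) := mul_le_mul ha ha hb.le (le_of_lt (mul_pos hn0 hm0))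
      _ = (n*m)^2 := (sq (n*m)).symm
    have hup : (δ^(-ε)/δ) * (200 * ((2*(k:ℝ)+3) * (δ^(-ε)/δ)))
        = 200 * (2*(k:ℝ)+3) * δ^(-2*ε-2) := by
      rw [hd1]
      have hz2 : δ^(-2*ε-2) = δ^(-ε-1) * δ^(-ε-1) := by
        rw [← Real.rpow_add hδ0]
        congr 1
        ring
      rw [hz2]
      ring
    have hkey : δ^(-(2:ℝ)-2*s+4*ε) ≤ 2 * N * (200 * (2*(k:ℝ)+3) * δ^(-2*ε-2)) := by
      rw [← hup]
      exact le_trans hlow h3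
    have hz : δ^(-2*ε-2) * δ^(2+2*ε) = 1 := by
      rw [← Real.rpow_add hδ0, show (-2*ε-2)+(2+2*ε) = 0 by ring, Real.rpow_zero]
    have hkey2 : δ^(-2*s+6*ε) ≤ 400 * (2*(k:ℝ)+3) * N := by
      have hmul := mul_le_mul_of_nonneg_right hkey
        (le_of_lt (Real.rpow_pos_of_pos hδ0 (2+2*ε)))
      have he1 : δ^(-2*s+6*ε) = δ^((-(2:ℝ)-2*s+4*ε) + (2+2*ε)) := by
        congr 1
        ring
      have he2 : δ^((-(2:ℝ)-2*s+4*ε) + (2+2*ε)) = δ^(-(2:ℝ)-2*s+4*ε) * δ^(2+2*ε) :=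
        Real.rpow_add hδ0 _ _
      have he3 : (2 * N * (200 * (2*(k:ℝ)+3) * δ^(-2*ε-2))) * δ^(2+2*ε)
          = 400 * (2*(k:ℝ)+3) * N * (δ^(-2*ε-2) * δ^(2+2*ε)) := by ring
      have he4 : 400 * (2*(k:ℝ)+3) * N * (δ^(-2*ε-2) * δ^(2+2*ε))
          = 400 * (2*(k:ℝ)+3) * N := by rw [hz]; ring
      calc δ^(-2*s+6*ε) = δ^((-(2:ℝ)-2*s+4*ε) + (2+2*ε)) := he1
      _ = δ^(-(2:ℝ)-2*s+4*ε) * δ^(2+2*ε) := he2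
      _ ≤ (2 * N * (200 * (2*(k:ℝ)+3) * δ^(-2*ε-2))) * δ^(2+2*ε) := hmul
      _ = 400 * (2*(k:ℝ)+3) * N * (δ^(-2*ε-2) * δ^(2+2*ε)) := he3
      _ = 400 * (2*(k:ℝ)+3) * N := he4
    have hfrac : (1/4000 : ℝ) * L⁻¹ * (400 * (2*(k:ℝ)+3)) ≤ 1 := by
      have h5 : 400 * (2*(k:ℝ)+3) ≤ 4000 * L := by linarith only [hLk, hkR]
      have h6 : (1/4000 : ℝ) * L⁻¹ * (400 * (2*(k:ℝ)+3))
          ≤ (1/4000 : ℝ) * L⁻¹ * (4000 * L) := by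
        apply mul_le_mul_of_nonneg_left h5
        positivity
      have h7 : (1/4000 : ℝ) * L⁻¹ * (4000 * L) = L⁻¹ * L := by ring
      have h8 : L⁻¹ * L = 1 := inv_mul_cancel₀ (ne_of_gt hLpos)
      linarith only [h6, h7.le, h7.ge, h8.le, h8.ge]
    calc (1/4000 : ℝ) * L⁻¹ * δ^(-2*s+6*ε)
        ≤ (1/4000 : ℝ) * L⁻¹ * (400 * (2*(k:ℝ)+3) * N) := by
          apply mul_le_mul_of_nonneg_left hkey2
          positivity
    _ = ((1/4000 : ℝ) * L⁻¹ * (400 * (2*(k:ℝ)+3))) * N := by ring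
    _ ≤ 1 * N := mul_le_mul_of_nonneg_right hfrac hN0
    _ = N := one_mul N
end
end

section
/- There is an absolute constant C ≥ 1 with the following property. Let P ⊂ B(0,1) ⊂ ℝ² be a set and let 0 < δ₁ ≤ δ₂ be dyadic numbers. Let a₂ ∈ δ₂ℤ, and assume that P can be covered by M dyadic δ₂-tubes D([a₂, a₂+δ₂) × [b_j, b_j+δ₂)), 1 ≤ j ≤ M, all with slope a₂. Then there are at most C·M dyadic δ₂-tubes with slope a₂ whose union contains every dyadic δ₁-tube that intersects P and has slope belonging to [a₂, a₂+δ₂). -/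
open Metric MeasureTheory Filter Set
open scoped ENNReal NNReal Pointwise

noncomputable section

/-- two δ₁-multiples: strict inequality improves by δ₁ -/
lemma step_lemma (δ : ℝ) (hδ : 0 < δ) (m N : ℤ) (h : (m : ℝ) * δ < N * δ) :
    (m : ℝ) * δ + δ ≤ N * δ := by
  have hm : m < N := by exact_mod_cast (mul_lt_mul_iff_left₀ hδ).1 h
  have : ((m + 1 : ℤ) : ℝ) * δ ≤ N * δ := by
    apply mul_le_mul_of_nonneg_right _ hδ.le
    exact_mod_cast hm
  push_cast at this
  linarith


/-- Lemma `tubeCovering` of the paper: if `P ⊆ B(0,1)` is covered by `M`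
dyadic `δ₂`-tubes of fixed slope `a₂ ∈ δ₂ℤ`, then at most `C·M` dyadic `δ₂`-tubes of
slope `a₂` suffice to cover every dyadic `δ₁`-tube which intersects `P` and has slope
in `[a₂, a₂ + δ₂)`. Dyadic tubes are encoded by the lower-left corners of their
defining dyadic squares. -/
theorem tube_covering :
    ∃ C : ℝ, 1 ≤ C ∧
      ∀ (k₁ k₂ : ℕ) (δ₁ δ₂ : ℝ),
        δ₁ = (2 : ℝ) ^ (-(k₁ : ℤ)) → δ₂ = (2 : ℝ) ^ (-(k₂ : ℤ)) → δ₁ ≤ δ₂ →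
        ∀ P : Set Plane, P ⊆ Metric.ball (0 : Plane) 1 →
          ∀ a₂ : ℝ, (∃ n : ℤ, a₂ = n * δ₂) →
            ∀ (M : ℕ) (bs : Fin M → ℝ),
              (∀ j, ∃ n : ℤ, bs j = n * δ₂) →
              P ⊆ ⋃ j, tube δ₂ (a₂, bs j) →
              ∃ F : Finset ℝ,
                (∀ β ∈ F, ∃ n : ℤ, β = n * δ₂) ∧
                (F.card : ℝ) ≤ C * M ∧
                ∀ c : ℝ × ℝ, DyadicCorner δ₁ c → c.1 ∈ Set.Ico a₂ (a₂ + δ₂) →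
                  (tube δ₁ c ∩ P).Nonempty →
                  tube δ₁ c ⊆ ⋃ β ∈ F, tube δ₂ (a₂, β) := by
  refine ⟨4, by norm_num, ?_⟩
  intro k₁ k₂ δ₁ δ₂ hδ₁ hδ₂ h12 P hPball a₂ ha₂ M bs hbs hPcov
  obtain ⟨na, hna⟩ := ha₂
  have hδ₁pos : (0:ℝ) < δ₁ := by rw [hδ₁]; positivity
  have hδ₂pos : (0:ℝ) < δ₂ := by rw [hδ₂]; positivity
  have hk : k₂ ≤ k₁ := by
    by_contra h
    push_neg at h
    have : δ₂ < δ₁ := by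
      rw [hδ₁, hδ₂]
      apply zpow_lt_zpow_right₀ one_lt_two
      omega
    linarith
  have hδ₂e : δ₂ = (2:ℝ) ^ (k₁ - k₂ : ℕ) * δ₁ := by
    rw [hδ₁, hδ₂, show ((2:ℝ) ^ (k₁ - k₂ : ℕ)) = (2:ℝ) ^ ((k₁ - k₂ : ℕ) : ℤ) from
      (zpow_natCast 2 _).symm, ← zpow_add₀ (two_ne_zero)]
    congr 1
    have : ((k₁ - k₂ : ℕ) : ℤ) = (k₁ : ℤ) - k₂ := by omega
    omega
  set E : ℤ := (2 : ℤ) ^ (k₁ - k₂ : ℕ) with hE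
  have hEδ : δ₂ = (E : ℝ) * δ₁ := by rw [hδ₂e]; push_cast [hE]; ring
  refine ⟨(Finset.univ : Finset (Fin M × Fin 4)).image
      (fun p => bs p.1 + ((p.2 : ℤ) - 2) * δ₂), ?_, ?_, ?_⟩
  · intro β hβ
    simp only [Finset.mem_image, Finset.mem_univ, true_and] at hβ
    obtain ⟨⟨j, i⟩, hji⟩ := hβ
    obtain ⟨nj, hnj⟩ := hbs j
    exact ⟨nj + ((i : ℤ) - 2), by rw [← hji, hnj]; push_cast; ring⟩
  · calc ((Finset.image _ _).card : ℝ) ≤ ((Finset.univ : Finset (Fin M × Fin 4)).card : ℝ) := by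
          exact_mod_cast Finset.card_image_le
      _ = 4 * M := by simp [Fintype.card_prod]; ring
  · rintro c ⟨mc, nc, hc1, hc2⟩ hc1mem ⟨x, hxT, hxP⟩
    obtain ⟨u, hu, v, hv, hx⟩ := hxT
    obtain ⟨j, hj⟩ := Set.mem_iUnion.1 (hPcov hxP)
    obtain ⟨u', hu', v', hv', hx'⟩ := hj
    obtain ⟨nj, hnj⟩ := hbs j
    -- |x 0| ≤ 1
    have hx0 : |x 0| ≤ 1 := by
      have hb := hPball hxP
      rw [Metric.mem_ball, dist_zero_right] at hb
      have h0 : ‖x 0‖ ≤ ‖x‖ := by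
        rw [EuclideanSpace.norm_eq]
        rw [show ‖x 0‖ = Real.sqrt (‖x 0‖^2) from (Real.sqrt_sq (norm_nonneg _)).symm]
        apply Real.sqrt_le_sqrt
        exact Finset.single_le_sum (fun i _ => sq_nonneg (‖x i‖)) (Finset.mem_univ 0)
      rw [Real.norm_eq_abs] at h0
      linarith
    -- c.1 + δ₁ ≤ a₂ + δ₂
    have hc1top : c.1 + δ₁ ≤ a₂ + δ₂ := by
      have hA : a₂ + δ₂ = ((na + 1) * E : ℤ) * δ₁ := by
        rw [hna, hEδ]; push_cast; ring
      have := step_lemma δ₁ hδ₁pos mc ((na + 1) * E) (by rw [← hc1, ← hA]; exact hc1mem.2)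
      rw [hc1, hA]; linarith
    -- slope differences
    simp only [Set.mem_Ico] at hu hu' hv hv' hc1mem
    have huu' : |u' - u| < δ₂ := by
      rw [abs_lt]
      constructor <;> [linarith [hu'.2, hu.1, hc1mem.1]; linarith [hu'.1, hu.2, hc1top]]
    -- |v - v'| < δ₂
    have hvv' : |v - v'| < δ₂ := by
      have hveq : v - v' = (u' - u) * x 0 := by linarith [hx, hx']
      calc |v - v'| = |u' - u| * |x 0| := by rw [hveq, abs_mul]
        _ ≤ |u' - u| * 1 := by
            apply mul_le_mul_of_nonneg_left hx0 (abs_nonneg _)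
        _ < δ₂ := by rw [mul_one]; exact huu'
    rw [abs_lt] at hvv'
    -- the floor β
    set K : ℤ := ⌊c.2 / δ₂⌋ with hK
    set β : ℝ := (K : ℝ) * δ₂ with hβ
    have hβle : β ≤ c.2 := by
      rw [hβ]
      rw [show (K:ℝ) * δ₂ = (c.2/δ₂) * δ₂ - (c.2/δ₂ - K) * δ₂ by ring]
      have h1 : c.2/δ₂ - K ≥ 0 := by
        have := Int.floor_le (c.2 / δ₂); linarith
      nlinarith [div_mul_cancel₀ c.2 (ne_of_gt hδ₂pos), hδ₂pos]
    have hβtop : c.2 + δ₁ ≤ β + δ₂ := by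
      have hB : β + δ₂ = ((K + 1) * E : ℤ) * δ₁ := by rw [hβ, hEδ]; push_cast; ring
      have hlt : c.2 < β + δ₂ := by
        have := Int.lt_floor_add_one (c.2 / δ₂)
        rw [hβ]
        nlinarith [div_mul_cancel₀ c.2 (ne_of_gt hδ₂pos)]
      have := step_lemma δ₁ hδ₁pos nc ((K + 1) * E) (by rw [← hc2, ← hB]; exact hlt)
      rw [hc2, hB]; linarith [this]
    -- bounds on c.2 relative to bs j
    have hlow : bs j - 2 * δ₂ < c.2 := by linarith [hv.1, hv'.1]
    have hhigh : c.2 < bs j + 2 * δ₂ := by linarith [hv.1, hv'.2]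
    -- K is within [nj - 2, nj + 1]
    have hKlow : nj - 2 ≤ K := by
      rw [hK]
      apply Int.le_floor.2
      rw [le_div_iff₀ hδ₂pos]
      push_cast
      rw [hnj] at hlow
      linarith
    have hKhigh : K ≤ nj + 1 := by
      have : K < nj + 2 := by
        rw [hK]
        apply Int.floor_lt.2
        rw [div_lt_iff₀ hδ₂pos]
        push_cast
        rw [hnj] at hhigh
        linarith
      omega
    -- β ∈ F
    have hβF : β ∈ (Finset.univ : Finset (Fin M × Fin 4)).image
        (fun p => bs p.1 + ((p.2 : ℤ) - 2) * δ₂) := by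
      apply Finset.mem_image.2
      refine ⟨(j, ⟨(K - nj + 2).toNat, by omega⟩), Finset.mem_univ _, ?_⟩
      simp only
      rw [hnj, hβ]
      have : (((K - nj + 2).toNat : ℤ) : ℝ) = (K : ℝ) - nj + 2 := by
        push_cast [Int.toNat_of_nonneg (by omega : (0:ℤ) ≤ K - nj + 2)]
        ring
      rw [this]
      push_cast
      ring
    intro y hy
    obtain ⟨u₀, hu₀, v₀, hv₀, hy1⟩ := hy
    simp only [Set.mem_Ico] at hu₀ hv₀
    refine Set.mem_biUnion hβF ?_
    refine ⟨u₀, ⟨by linarith [hc1mem.1, hu₀.1], by linarith [hu₀.2, hc1top]⟩,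
      v₀, ⟨by linarith [hβle, hv₀.1], by linarith [hv₀.2, hβtop]⟩, hy1⟩
end
end

section
/- Let 0 < s ≤ 1 and let K ⊂ ℝ² be a Furstenberg s-set with associated direction set S_K ⊂ S¹ of positive H¹ measure and associated lines L_e, e ∈ S_K, with dim_H(K ∩ L_e) ≥ s. Let {F_i}_{i∈ℕ} be a countable family of sets with K ⊂ ∪_i F_i. Then for every 0 < ε < s there exist an index i, a constant c > 0, and a set S' ⊂ S_K of positive H¹ measure such that H^{s−ε}_∞(F_i ∩ L_e) ≥ c for every e ∈ S'. In particular, F_i is a Furstenberg (s−ε)-set. -/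
open Metric MeasureTheory Filter Set
open scoped ENNReal NNReal Pointwise

noncomputable section

theorem hContent_mono {X : Type*} [PseudoEMetricSpace X] {s : ℝ} {A B : Set X}
    (h : A ⊆ B) : hContent s A ≤ hContent s B := by
  refine le_iInf₂ fun U hU => iInf₂_le U (h.trans hU)

theorem hContent_iUnion_le {X : Type*} [PseudoEMetricSpace X] (s : ℝ) (A : ℕ → Set X) :
    hContent s (⋃ i, A i) ≤ ∑' i, hContent s (A i) := by
  by_cases htop : ∃ i, hContent s (A i) = ∞
  · obtain ⟨i, hi⟩ := htop
    refine le_top.trans_eq (ENNReal.tsum_eq_top_of_eq_top ⟨i, hi⟩).symm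
  push_neg at htop
  refine ENNReal.le_of_forall_pos_le_add fun ε hε _ => ?_
  obtain ⟨δ, hδpos, hδsum⟩ := ENNReal.exists_pos_sum_of_countable
    (by exact_mod_cast hε.ne' : (ε : ℝ≥0∞) ≠ 0) ℕ
  have key : ∀ i : ℕ, ∃ U : ℕ → Set X, (A i ⊆ ⋃ n, U n) ∧
      ∑' n, EMetric.diam (U n) ^ s ≤ hContent s (A i) + δ i := by
    intro i
    have hlt : hContent s (A i) < hContent s (A i) + δ i :=
      ENNReal.lt_add_right (htop i) (by exact_mod_cast (hδpos i).ne')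
    rw [hContent] at hlt
    obtain ⟨U, hU⟩ := iInf_lt_iff.mp hlt
    obtain ⟨hUc, hUs⟩ := iInf_lt_iff.mp hU
    exact ⟨U, hUc, hUs.le⟩
  choose U hUc hUs using key
  set e := Denumerable.eqv (ℕ × ℕ)
  have hcover : (⋃ i, A i) ⊆ ⋃ n, U (e.symm n).1 (e.symm n).2 := by
    intro x hx
    obtain ⟨i, hi⟩ := mem_iUnion.mp hx
    obtain ⟨m, hm⟩ := mem_iUnion.mp (hUc i hi)
    exact mem_iUnion.mpr ⟨e (i, m), by simpa using hm⟩
  calc hContent s (⋃ i, A i) ≤ ∑' n, EMetric.diam (U (e.symm n).1 (e.symm n).2) ^ s :=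
        iInf₂_le (fun n => U (e.symm n).1 (e.symm n).2) hcover
    _ = ∑' p : ℕ × ℕ, EMetric.diam (U p.1 p.2) ^ s :=
        e.symm.tsum_eq (fun p => EMetric.diam (U p.1 p.2) ^ s)
    _ = ∑' i, ∑' m, EMetric.diam (U i m) ^ s := ENNReal.tsum_prod (f := fun i m => EMetric.diam (U i m) ^ s)
    _ ≤ ∑' i, (hContent s (A i) + δ i) := ENNReal.tsum_le_tsum hUs
    _ = (∑' i, hContent s (A i)) + ∑' i, (δ i : ℝ≥0∞) := ENNReal.tsum_add
    _ ≤ (∑' i, hContent s (A i)) + ε := add_le_add le_rfl hδsum.le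

theorem hContent_le_hausdorffMeasure {X : Type*} [EMetricSpace X] [MeasurableSpace X]
    [BorelSpace X] {s : ℝ} (hs : 0 < s) (A : Set X) : hContent s A ≤ μH[s] A := by
  rw [MeasureTheory.Measure.hausdorffMeasure_apply]
  refine le_trans ?_ (le_iSup₂ (1 : ℝ≥0∞) one_pos)
  refine le_iInf fun t => le_iInf fun ht => le_iInf fun _ => ?_
  refine (iInf₂_le t ht).trans (le_of_eq ?_)
  refine tsum_congr fun n => ?_
  rcases (t n).eq_empty_or_nonempty with h | h
  · simp [h, ENNReal.zero_rpow_of_pos hs, EMetric.diam, hs]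
  · simp [h, EMetric.diam]

theorem hausdorffMeasure_eq_zero_of_hContent_eq_zero {X : Type*} [EMetricSpace X]
    [MeasurableSpace X] [BorelSpace X] {s : ℝ} (hs : 0 < s) {A : Set X}
    (h : hContent s A = 0) : μH[s] A = 0 := by
  rw [MeasureTheory.Measure.hausdorffMeasure_apply]
  refine le_antisymm (iSup₂_le fun r hr => ?_) zero_le
  refine ENNReal.le_of_forall_pos_le_add fun η hη _ => ?_
  rw [zero_add]
  have hηpos : (0:ℝ≥0∞) < η := ENNReal.coe_pos.mpr hη
  have hpos : 0 < min (η : ℝ≥0∞) (r ^ s) :=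
    lt_min hηpos (ENNReal.rpow_pos_of_nonneg hr hs.le)
  have hlt : hContent s A < min (η : ℝ≥0∞) (r ^ s) := h ▸ hpos
  rw [hContent] at hlt
  obtain ⟨U, hU⟩ := iInf_lt_iff.mp hlt
  obtain ⟨hUc, hUs⟩ := iInf_lt_iff.mp hU
  have hdiam : ∀ n, EMetric.diam (U n) ≤ r := by
    intro n
    by_contra hcon
    push_neg at hcon
    have : r ^ s < EMetric.diam (U n) ^ s := (ENNReal.rpow_lt_rpow_iff hs).mpr hcon
    have hle : EMetric.diam (U n) ^ s ≤ ∑' m, EMetric.diam (U m) ^ s := ENNReal.le_tsum n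
    exact absurd ((this.trans_le hle).trans (hUs.trans_le (min_le_right _ _))) (lt_irrefl _)
  refine le_of_lt (lt_of_le_of_lt ?_ (hUs.trans_le (min_le_left _ _)))
  refine le_trans (iInf_le _ U) ?_
  rw [iInf_pos hUc, iInf_pos (show ∀ n, ediam (U n) ≤ r from hdiam)]
  exact ENNReal.tsum_le_tsum fun n => iSup_le fun _ => le_rfl

/-- if `K` is a Furstenberg `s`-set with direction set `S_K` and lines
`L_e = lineThrough (L e) e`, and `{F_i}` is a countable cover of `K`, then for every
`0 < ε < s` some `F_i` carries `(s-ε)`-dimensional Hausdorff content `≥ c > 0` on the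
lines `L_e` for a positive measure set of directions `e`; in particular `F_i` is a
Furstenberg `(s-ε)`-set. -/
theorem furstenberg_cover_member :
    ∀ s : ℝ, 0 < s → s ≤ 1 →
      ∀ (K SK : Set Plane) (L : Plane → Plane),
        SK ⊆ Metric.sphere (0 : Plane) 1 →
        0 < μH[1] SK →
        (∀ e ∈ SK, ENNReal.ofReal s ≤ dimH (K ∩ lineThrough (L e) e)) →
        ∀ F : ℕ → Set Plane, K ⊆ ⋃ i, F i →
          ∀ ε : ℝ, 0 < ε → ε < s →
            ∃ (i : ℕ) (c : ℝ) (S' : Set Plane),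
              0 < c ∧ S' ⊆ SK ∧ 0 < μH[1] S' ∧
              ∀ e ∈ S',
                ENNReal.ofReal c ≤ hContent (s - ε) (F i ∩ lineThrough (L e) e) ∧
                ENNReal.ofReal (s - ε) ≤ dimH (F i ∩ lineThrough (L e) e) := by
  intro s hs _hs1 K SK L _hsph hSKpos hdim F hcover ε hε hεs
  set d := s - ε with hd
  have hd0 : 0 < d := sub_pos.mpr hεs
  have hKpos : ∀ e ∈ SK, 0 < hContent d (K ∩ lineThrough (L e) e) := by
    intro e he
    rcases eq_or_lt_of_le (show (0:ℝ≥0∞) ≤ hContent d (K ∩ lineThrough (L e) e) from zero_le) with h0 | h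
    · exfalso
      have hμ0 : μH[d] (K ∩ lineThrough (L e) e) = 0 :=
        hausdorffMeasure_eq_zero_of_hContent_eq_zero hd0 h0.symm
      have hlt : ((d.toNNReal : ℝ≥0∞)) < dimH (K ∩ lineThrough (L e) e) := by
        refine lt_of_lt_of_le ?_ (hdim e he)
        show ENNReal.ofReal d < ENNReal.ofReal s
        exact (ENNReal.ofReal_lt_ofReal_iff hs).mpr (by linarith)
      have htop := hausdorffMeasure_of_lt_dimH hlt
      rw [Real.coe_toNNReal d hd0.le, hμ0] at htop
      exact ENNReal.zero_ne_top htop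
    · exact h
  have hFpos : ∀ e ∈ SK, ∃ i, 0 < hContent d (F i ∩ lineThrough (L e) e) := by
    intro e he
    by_contra hcon
    push_neg at hcon
    have hz : ∀ i, hContent d (F i ∩ lineThrough (L e) e) = 0 := fun i =>
      le_antisymm (hcon i) zero_le
    have hsub : K ∩ lineThrough (L e) e ⊆ ⋃ i, F i ∩ lineThrough (L e) e := by
      rintro x ⟨hxK, hxL⟩
      obtain ⟨i, hi⟩ := mem_iUnion.mp (hcover hxK)
      exact mem_iUnion.mpr ⟨i, hi, hxL⟩
    have hle := (hContent_mono hsub).trans (hContent_iUnion_le d _)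
    rw [tsum_congr hz, tsum_zero] at hle
    exact absurd (le_antisymm hle zero_le) (hKpos e he).ne'
  set S : ℕ → ℕ → Set Plane := fun i n =>
    {e | e ∈ SK ∧ ((n : ℝ≥0∞) + 1)⁻¹ ≤ hContent d (F i ∩ lineThrough (L e) e)} with hS
  have hSKsub : SK ⊆ ⋃ i, ⋃ n, S i n := by
    intro e he
    obtain ⟨i, hi⟩ := hFpos e he
    obtain ⟨n, hn⟩ := ENNReal.exists_inv_nat_lt hi.ne'
    refine mem_iUnion.mpr ⟨i, mem_iUnion.mpr ⟨n, he, ?_⟩⟩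
    refine le_trans ?_ hn.le
    exact ENNReal.inv_le_inv.mpr (le_add_right le_rfl)
  have hex : ∃ i n, 0 < μH[1] (S i n) := by
    by_contra hcon
    push_neg at hcon
    have hnull : μH[1] (⋃ i, ⋃ n, S i n) = 0 :=
      measure_iUnion_null fun i => measure_iUnion_null fun n =>
        le_antisymm (le_of_not_gt (by simpa using (hcon i n))) zero_le
    exact absurd (le_antisymm ((measure_mono hSKsub).trans hnull.le) zero_le)
      hSKpos.ne'
  obtain ⟨i, n, hpos⟩ := hex
  refine ⟨i, ((n : ℝ) + 1)⁻¹, S i n, by positivity, fun e he => he.1, hpos, ?_⟩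
  intro e he
  have hc : ENNReal.ofReal ((n : ℝ) + 1)⁻¹ = ((n : ℝ≥0∞) + 1)⁻¹ := by
    rw [ENNReal.ofReal_inv_of_pos (by positivity)]
    congr 1
    rw [ENNReal.ofReal_add (by positivity) zero_le_one]
    simp
  have hcontent : ENNReal.ofReal ((n : ℝ) + 1)⁻¹ ≤
      hContent d (F i ∩ lineThrough (L e) e) := hc ▸ he.2
  refine ⟨hcontent, ?_⟩
  have hμpos : μH[d] (F i ∩ lineThrough (L e) e) ≠ 0 := by
    have h1 : (0 : ℝ≥0∞) < hContent d (F i ∩ lineThrough (L e) e) :=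
      lt_of_lt_of_le (ENNReal.ofReal_pos.mpr (by positivity)) hcontent
    exact fun h0 => absurd (le_antisymm
      ((hContent_le_hausdorffMeasure hd0 _).trans h0.le) zero_le) h1.ne'
  have hfin := le_dimH_of_hausdorffMeasure_ne_zero (d := d.toNNReal)
    (by rwa [Real.coe_toNNReal d hd0.le])
  rw [show ENNReal.ofReal d = (d.toNNReal : ℝ≥0∞) from rfl]
  exact hfin
end
end

section
/- There is an absolute constant C' ≥ 1 with the following property. Let 0 < t ≤ 1, C ≥ 1, 0 < δ < 1/2, and let P ⊂ B(0,1) ⊂ ℝ² be a (δ,t,C)-set. Then for every p ∈ P, Σ_{q ∈ P, q ≠ p} |p − q|^{−t} ≤ C'·C·δ^{−t}·log(1/δ). -/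
open Metric MeasureTheory Filter Set
open scoped ENNReal NNReal Pointwise

noncomputable section

/-- the standard dyadic-annuli estimate: for a `(δ,t,C)`-set
`P ⊆ B(0,1) ⊆ ℝ²` and any `p ∈ P`, `∑_{q ∈ P, q ≠ p} |p - q|^{-t} ≤ C'·C·δ^{-t}·log(1/δ)`. -/
theorem delta_set_riesz_sum :
    ∃ C' : ℝ, 1 ≤ C' ∧
      ∀ t C δ : ℝ, 0 < t → t ≤ 1 → 1 ≤ C → 0 < δ → δ < 1/2 →
        ∀ P : Set Plane, P ⊆ Metric.ball (0 : Plane) 1 →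
          IsDeltaSet δ t C P →
          ∀ p ∈ P,
            (∑ᶠ q ∈ P \ {p}, (dist p q) ^ (-t)) ≤ C' * C * δ ^ (-t) * Real.log (1/δ) := by
  refine ⟨10, by norm_num, ?_⟩
  intro t C δ ht ht1 hC hδ hδ2 P hPball hP p hpP
  obtain ⟨hPfin, hsep, hcard⟩ := hP
  classical
  have hδ1 : δ < 1 := by linarith
  have hL : Real.log 2 ≤ Real.log (1/δ) := by
    apply Real.log_le_log (by norm_num)
    rw [le_div_iff₀ hδ]; linarith
  have hL0 : 0 < Real.log (1/δ) := lt_of_lt_of_le (Real.log_pos (by norm_num)) hL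
  have hfin : (P \ {p}).Finite := hPfin.diff
  rw [finsum_mem_eq_finite_toFinset_sum _ hfin]
  set s := hfin.toFinset with hs
  set K : ℕ := (⌊Real.logb 2 (2/δ)⌋).toNat + 1 with hKdef
  set g : EuclideanSpace ℝ (Fin 2) → ℕ :=
    fun q => (⌊Real.logb 2 (dist p q / δ)⌋).toNat with hgdef
  -- basic facts about members of s
  have hmem : ∀ q ∈ s, q ∈ P ∧ q ≠ p := by
    intro q hq
    rw [hs, Set.Finite.mem_toFinset] at hq
    exact ⟨hq.1, hq.2⟩
  have hdlow : ∀ q ∈ s, δ ≤ dist p q := by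
    intro q hq
    obtain ⟨hqP, hqp⟩ := hmem q hq
    exact hsep p hpP q hqP (fun h => hqp h.symm)
  have hdhigh : ∀ q ∈ s, dist p q < 2 := by
    intro q hq
    obtain ⟨hqP, _⟩ := hmem q hq
    have h1 : dist p (0 : EuclideanSpace ℝ (Fin 2)) < 1 := mem_ball.mp (hPball hpP)
    have h2 : dist (0 : EuclideanSpace ℝ (Fin 2)) q < 1 := by
      rw [dist_comm]; exact mem_ball.mp (hPball hqP)
    calc dist p q ≤ dist p 0 + dist 0 q := dist_triangle _ _ _
      _ < 2 := by linarith
  have hgfl : ∀ q ∈ s, ((g q : ℝ)) = ⌊Real.logb 2 (dist p q / δ)⌋ := by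
    intro q hq
    have h1 : (1:ℝ) ≤ dist p q / δ := (one_le_div hδ).mpr (hdlow q hq)
    have : (0:ℝ) ≤ Real.logb 2 (dist p q / δ) := Real.logb_nonneg one_lt_two h1
    exact_mod_cast Int.toNat_of_nonneg (Int.floor_nonneg.mpr this)
  have hlow : ∀ q ∈ s, (2:ℝ) ^ (g q) * δ ≤ dist p q := by
    intro q hq
    have hdpos : 0 < dist p q / δ := div_pos (lt_of_lt_of_le hδ (hdlow q hq)) hδ
    have h1 : ((g q : ℝ)) ≤ Real.logb 2 (dist p q / δ) := by
      rw [hgfl q hq]; exact Int.floor_le _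
    have h2 : (2:ℝ) ^ (g q : ℝ) ≤ dist p q / δ := by
      calc (2:ℝ) ^ (g q : ℝ) ≤ (2:ℝ) ^ Real.logb 2 (dist p q / δ) :=
            Real.rpow_le_rpow_of_exponent_le one_le_two h1
        _ = dist p q / δ := Real.rpow_logb (by norm_num) (by norm_num) hdpos
    rw [← Real.rpow_natCast (2:ℝ) (g q)]
    calc (2:ℝ) ^ (g q : ℝ) * δ ≤ (dist p q / δ) * δ := by
          exact mul_le_mul_of_nonneg_right h2 hδ.le
      _ = dist p q := by field_simp
  have hup : ∀ q ∈ s, dist p q ≤ (2:ℝ) ^ (g q + 1) * δ := by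
    intro q hq
    have hdpos : 0 < dist p q / δ := div_pos (lt_of_lt_of_le hδ (hdlow q hq)) hδ
    have h1 : Real.logb 2 (dist p q / δ) ≤ ((g q : ℝ)) + 1 := by
      rw [hgfl q hq]; exact (Int.lt_floor_add_one _).le
    have h2 : dist p q / δ ≤ (2:ℝ) ^ ((g q : ℝ) + 1) := by
      calc dist p q / δ = (2:ℝ) ^ Real.logb 2 (dist p q / δ) :=
            (Real.rpow_logb (by norm_num) (by norm_num) hdpos).symm
        _ ≤ (2:ℝ) ^ ((g q : ℝ) + 1) := Real.rpow_le_rpow_of_exponent_le one_le_two h1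
    have h3 : (2:ℝ) ^ ((g q : ℝ) + 1) = (2:ℝ) ^ (g q + 1) := by
      rw [← Real.rpow_natCast (2:ℝ) (g q + 1)]
      push_cast; ring_nf
    calc dist p q = (dist p q / δ) * δ := by field_simp
      _ ≤ (2:ℝ) ^ ((g q : ℝ) + 1) * δ := mul_le_mul_of_nonneg_right h2 hδ.le
      _ = (2:ℝ) ^ (g q + 1) * δ := by rw [h3]
  have hfiber : ∀ q ∈ s, g q ∈ Finset.range K := by
    intro q hq
    rw [Finset.mem_range, hKdef]
    have h1 : Real.logb 2 (dist p q / δ) ≤ Real.logb 2 (2/δ) := by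
      apply Real.logb_le_logb_of_le one_lt_two
        (div_pos (lt_of_lt_of_le hδ (hdlow q hq)) hδ)
      gcongr
      exact (hdhigh q hq).le
    have : g q ≤ (⌊Real.logb 2 (2/δ)⌋).toNat := by
      rw [hgdef]
      exact Int.toNat_le_toNat (Int.floor_le_floor h1)
    omega
  rw [← Finset.sum_fiberwise_of_maps_to hfiber]
  -- per-annulus bound
  have hδnegt : (0:ℝ) < δ ^ (-t) := Real.rpow_pos_of_pos hδ _
  have hann : ∀ k ∈ Finset.range K,
      ∑ q ∈ s.filter (fun q => g q = k), dist p q ^ (-t) ≤ 2 * C * δ ^ (-t) := by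
    intro k _
    set A := s.filter (fun q => g q = k) with hA
    have hterm : ∀ q ∈ A, dist p q ^ (-t) ≤ ((2:ℝ) ^ k * δ) ^ (-t) := by
      intro q hq
      rw [hA, Finset.mem_filter] at hq
      have h1 := hlow q hq.1
      rw [hq.2] at h1
      exact Real.rpow_le_rpow_of_nonpos (by positivity) h1 (by linarith)
    have hsum1 : ∑ q ∈ A, dist p q ^ (-t) ≤ (A.card : ℝ) * ((2:ℝ) ^ k * δ) ^ (-t) := by
      calc ∑ q ∈ A, dist p q ^ (-t) ≤ ∑ _q ∈ A, ((2:ℝ) ^ k * δ) ^ (-t) :=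
            Finset.sum_le_sum hterm
        _ = (A.card : ℝ) * ((2:ℝ) ^ k * δ) ^ (-t) := by
            rw [Finset.sum_const, nsmul_eq_mul]
    by_cases hr : (2:ℝ) ^ (k+1) * δ ≤ 1
    · -- small scale: use ball around p of radius 2^(k+1) δ
      have hsub : (A : Set (EuclideanSpace ℝ (Fin 2))) ⊆
          P ∩ Metric.closedBall p ((2:ℝ) ^ (k+1) * δ) := by
        intro q hq
        rw [Finset.mem_coe, hA, Finset.mem_filter] at hq
        refine ⟨(hmem q hq.1).1, ?_⟩
        rw [Metric.mem_closedBall, dist_comm]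
        have := hup q hq.1
        rw [hq.2] at this
        exact this
      have hcardA : (A.card : ℝ) ≤ C * (((2:ℝ) ^ (k+1) * δ) / δ) ^ t := by
        have h1 : ((P ∩ Metric.closedBall p ((2:ℝ) ^ (k+1) * δ)).ncard : ℝ)
            ≤ C * (((2:ℝ) ^ (k+1) * δ) / δ) ^ t := by
          apply hcard
          · have h1 : (1:ℝ) ≤ 2 ^ (k+1) := one_le_pow₀ (by norm_num)
            nlinarith
          · exact hr
        calc (A.card : ℝ) = ((A : Set (EuclideanSpace ℝ (Fin 2))).ncard : ℝ) := by
              rw [Set.ncard_coe_finset]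
          _ ≤ ((P ∩ Metric.closedBall p ((2:ℝ) ^ (k+1) * δ)).ncard : ℝ) := by
              exact_mod_cast Nat.cast_le.mpr (Set.ncard_le_ncard hsub
                (hPfin.inter_of_left _))
          _ ≤ _ := h1
      have hkey : C * (((2:ℝ) ^ (k+1) * δ) / δ) ^ t * ((2:ℝ) ^ k * δ) ^ (-t)
          ≤ 2 * C * δ ^ (-t) := by
        have hx : (0:ℝ) < (2:ℝ) ^ k := by positivity
        have e1 : ((2:ℝ) ^ (k+1) * δ) / δ = 2 * (2:ℝ) ^ k := by
          field_simp; ring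
        rw [e1]
        rw [Real.mul_rpow (by norm_num) hx.le, Real.mul_rpow hx.le hδ.le]
        have e2 : ((2:ℝ) ^ k) ^ t * ((2:ℝ) ^ k) ^ (-t) = 1 := by
          rw [← Real.rpow_add hx]; simp
        have h2t : (2:ℝ) ^ t ≤ 2 := by
          calc (2:ℝ) ^ t ≤ (2:ℝ) ^ (1:ℝ) :=
                Real.rpow_le_rpow_of_exponent_le one_le_two ht1
            _ = 2 := Real.rpow_one 2
        calc C * ((2:ℝ) ^ t * ((2:ℝ) ^ k) ^ t) * (((2:ℝ) ^ k) ^ (-t) * δ ^ (-t))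
            = C * (2:ℝ) ^ t * δ ^ (-t) * (((2:ℝ) ^ k) ^ t * ((2:ℝ) ^ k) ^ (-t)) := by ring
          _ = C * (2:ℝ) ^ t * δ ^ (-t) := by rw [e2, mul_one]
          _ ≤ (C * 2) * δ ^ (-t) := by
              apply mul_le_mul_of_nonneg_right
                (mul_le_mul_of_nonneg_left h2t (by linarith)) hδnegt.le
          _ = 2 * C * δ ^ (-t) := by ring
      calc ∑ q ∈ A, dist p q ^ (-t) ≤ (A.card : ℝ) * ((2:ℝ) ^ k * δ) ^ (-t) := hsum1
        _ ≤ C * (((2:ℝ) ^ (k+1) * δ) / δ) ^ t * ((2:ℝ) ^ k * δ) ^ (-t) := by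
            apply mul_le_mul_of_nonneg_right hcardA (by positivity)
        _ ≤ 2 * C * δ ^ (-t) := hkey
    · -- large scale: all of P fits in closedBall 0 1
      push_neg at hr
      have hsub : (A : Set (EuclideanSpace ℝ (Fin 2))) ⊆
          P ∩ Metric.closedBall (0 : EuclideanSpace ℝ (Fin 2)) 1 := by
        intro q hq
        rw [Finset.mem_coe, hA, Finset.mem_filter] at hq
        have hqP := (hmem q hq.1).1
        exact ⟨hqP, Metric.ball_subset_closedBall (hPball hqP)⟩
      have hcardA : (A.card : ℝ) ≤ C * δ ^ (-t) := by
        have h1 : ((P ∩ Metric.closedBall (0:EuclideanSpace ℝ (Fin 2)) 1).ncard : ℝ)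
            ≤ C * (1 / δ) ^ t := hcard 0 1 hδ1.le le_rfl
        have e : (1 / δ) ^ t = δ ^ (-t) := by
          rw [one_div, ← Real.rpow_neg_one δ, ← Real.rpow_mul hδ.le]
          norm_num
        calc (A.card : ℝ) = ((A : Set (EuclideanSpace ℝ (Fin 2))).ncard : ℝ) := by
              rw [Set.ncard_coe_finset]
          _ ≤ ((P ∩ Metric.closedBall (0:EuclideanSpace ℝ (Fin 2)) 1).ncard : ℝ) := by
              exact_mod_cast Nat.cast_le.mpr (Set.ncard_le_ncard hsub
                (hPfin.inter_of_left _))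
          _ ≤ C * (1 / δ) ^ t := h1
          _ = C * δ ^ (-t) := by rw [e]
      have hterm2 : ∀ q ∈ A, dist p q ^ (-t) ≤ 2 := by
        intro q hq
        have h1 := hterm q hq
        have h2 : (1:ℝ)/2 ≤ (2:ℝ) ^ k * δ := by
          have : (2:ℝ) ^ (k+1) = 2 * (2:ℝ)^k := by ring
          nlinarith
        calc dist p q ^ (-t) ≤ ((2:ℝ) ^ k * δ) ^ (-t) := h1
          _ ≤ ((1:ℝ)/2) ^ (-t) := Real.rpow_le_rpow_of_nonpos (by norm_num) h2 (by linarith)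
          _ = (2:ℝ) ^ t := by
              rw [one_div, ← Real.rpow_neg_one (2:ℝ),
                ← Real.rpow_mul (by norm_num : (0:ℝ) ≤ 2)]
              norm_num
          _ ≤ (2:ℝ) ^ (1:ℝ) := Real.rpow_le_rpow_of_exponent_le one_le_two ht1
          _ = 2 := Real.rpow_one 2
      calc ∑ q ∈ A, dist p q ^ (-t) ≤ ∑ _q ∈ A, (2:ℝ) := Finset.sum_le_sum hterm2
        _ = (A.card : ℝ) * 2 := by rw [Finset.sum_const, nsmul_eq_mul]
        _ ≤ (C * δ ^ (-t)) * 2 := by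
            apply mul_le_mul_of_nonneg_right hcardA (by norm_num)
        _ = 2 * C * δ ^ (-t) := by ring
  -- total bound
  have hKbound : (K : ℝ) ≤ 5 * Real.log (1/δ) := by
    have h2δ : (0:ℝ) < 2/δ := by positivity
    have hfl : ((⌊Real.logb 2 (2/δ)⌋).toNat : ℝ) ≤ Real.logb 2 (2/δ) := by
      have h1 : (0:ℝ) ≤ Real.logb 2 (2/δ) := by
        apply Real.logb_nonneg one_lt_two
        rw [le_div_iff₀ hδ]; linarith
      rw [show ((⌊Real.logb 2 (2/δ)⌋.toNat : ℕ) : ℝ)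
          = ((⌊Real.logb 2 (2/δ)⌋ : ℤ) : ℝ) by
        exact_mod_cast Int.toNat_of_nonneg (Int.floor_nonneg.mpr h1)]
      exact Int.floor_le _
    have hKle : (K : ℝ) ≤ Real.logb 2 (2/δ) + 1 := by
      rw [hKdef]; push_cast; linarith
    have hlogb : Real.logb 2 (2/δ) = (Real.log 2 + Real.log (1/δ)) / Real.log 2 := by
      rw [Real.logb, show (2:ℝ)/δ = 2 * (1/δ) by ring,
        Real.log_mul (by norm_num) (by positivity)]
    have hlog2 : (0.6931471803 : ℝ) < Real.log 2 := Real.log_two_gt_d9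
    rw [hlogb] at hKle
    have : (Real.log 2 + Real.log (1/δ)) / Real.log 2 + 1 ≤ 5 * Real.log (1/δ) := by
      rw [div_add' _ _ _ (by linarith), div_le_iff₀ (by linarith)]
      nlinarith
    linarith
  calc ∑ k ∈ Finset.range K, ∑ q ∈ s.filter (fun q => g q = k), dist p q ^ (-t)
      ≤ ∑ _k ∈ Finset.range K, 2 * C * δ ^ (-t) := Finset.sum_le_sum hann
    _ = (K : ℝ) * (2 * C * δ ^ (-t)) := by
        rw [Finset.sum_const, Finset.card_range, nsmul_eq_mul]
    _ ≤ (5 * Real.log (1/δ)) * (2 * C * δ ^ (-t)) := by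
        apply mul_le_mul_of_nonneg_right hKbound (by positivity)
    _ = 10 * C * δ ^ (-t) * Real.log (1/δ) := by ring
end
end
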